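/- arXiv:1501.04748 — 3 statements merged into one kernel-verified Lean document; each statement's English description precedes it below -/
import Mathlib

section
/- Let Γ = (C, A, Δ) be a normed BPA system and R ⊆ C_G. If γ ≃_R δ, then Rd_R(γ) = Rd_R(δ). -/
open Relation

/-- A BPA system over constants `C` and actions `A`: a distinguished silent
action `tau`, and a finite set of transition rules `X —ℓ→ α`, where `C` and
`A` are finite. -/
structure BPA (C A : Type) where
  tau : A
  rules : Set (C × A × List C)
  finC : Finite C
  finA : Finite A
  finRules : rules.Finite

namespace BPA

variable {C A : Type}

/-- One-step labelled transition between processes.  Processes are strings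
over `C` (lists, with the leftmost constant acting first). -/
def Step (Γ : BPA C A) (ℓ : A) (p q : List C) : Prop :=
  ∃ X γ β, (X, ℓ, γ) ∈ Γ.rules ∧ p = X :: β ∧ q = γ ++ β

/-- A transition carrying an arbitrary label. -/
def AnyStep (Γ : BPA C A) (p q : List C) : Prop := ∃ ℓ, Γ.Step ℓ p q

/-- `⟹` : the reflexive transitive closure of silent steps. -/
def TauStar (Γ : BPA C A) : List C → List C → Prop := ReflTransGen (Γ.Step Γ.tau)

/-- A process is normed if it can reach the empty process `ε`. -/
def NormedProc (Γ : BPA C A) (p : List C) : Prop := ReflTransGen Γ.AnyStep p []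

/-- The BPA system is normed. -/
def Normed (Γ : BPA C A) : Prop := ∀ X : C, Γ.NormedProc [X]

/-- A chain of `s`-steps starting at `start` in which every visited state is
related by `r` to the process `anchor`. -/
def RelChain (s : List C → List C → Prop) (r : List C → List C → Prop)
    (anchor : List C) : List C → List C → Prop :=
  ReflTransGen fun x y => s x y ∧ r anchor y

/-- Branching bisimulation (an equivalence relation by convention). -/
def IsBranchingBisim (Γ : BPA C A) (r : List C → List C → Prop) : Prop :=
  Equivalence r ∧ ∀ α β, r α β →
    ((∀ a, a ≠ Γ.tau → ∀ α', Γ.Step a α α' →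
        ∃ β'' β', RelChain (Γ.Step Γ.tau) r β β β'' ∧ Γ.Step a β'' β' ∧ r α' β') ∧
     (∀ α', Γ.Step Γ.tau α α' → ¬ r α α' →
        ∃ β'' β', RelChain (Γ.Step Γ.tau) r β β β'' ∧ Γ.Step Γ.tau β'' β' ∧
          ¬ r β'' β' ∧ r α' β'))

/-- Branching bisimilarity `≃` : the largest branching bisimulation. -/
def Bisim (Γ : BPA C A) (α β : List C) : Prop :=
  ∃ r, Γ.IsBranchingBisim r ∧ r α β

/-- A ground process: it can silently reach `ε`. -/
def Ground (Γ : BPA C A) (p : List C) : Prop := Γ.TauStar p []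

/-- The set `C_G` of ground constants. -/
def GroundC (Γ : BPA C A) : Set C := {X | Γ.Ground [X]}

/-- `R`-equality `=_R`: the two processes differ only in suffixes over `R`. -/
def REq (R : Set C) (α β : List C) : Prop :=
  ∃ ζ a b, α = ζ ++ a ∧ β = ζ ++ b ∧ (∀ X ∈ a, X ∈ R) ∧ (∀ X ∈ b, X ∈ R)

open Classical in
/-- The `R`-normal form `α_R` of a process: delete the maximal suffix over `R`. -/
noncomputable def nf (R : Set C) (α : List C) : List C :=
  (α.reverse.dropWhile fun X => decide (X ∈ R)).reverse

/-- A process is in `R`-normal form. -/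
def InNF (R : Set C) (α : List C) : Prop := nf R α = α

/-- The `R`-transition relation `—ℓ→_R` between `R`-normal forms. -/
def StepR (Γ : BPA C A) (R : Set C) (ℓ : A) (ζ η : List C) : Prop :=
  ∃ α β, ζ = nf R α ∧ η = nf R β ∧ Γ.Step ℓ α β

/-- `⟹_R`. -/
def TauStarR (Γ : BPA C A) (R : Set C) : List C → List C → Prop :=
  ReflTransGen (Γ.StepR R Γ.tau)

/-- `R`-bisimulation: an equivalence relation containing `=_R` satisfying
ground preservation and the relativized branching transfer conditions. -/
def IsRBisim (Γ : BPA C A) (R : Set C) (r : List C → List C → Prop) : Prop :=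
  Equivalence r ∧ (∀ α β, REq R α β → r α β) ∧
  ∀ α β, r α β →
    ((Γ.TauStar α [] → Γ.TauStar β []) ∧
     (∀ α', Γ.Step Γ.tau α α' → ¬ r α α' →
        ∃ β'' β', RelChain (Γ.StepR R Γ.tau) r β (nf R β) β'' ∧
          Γ.StepR R Γ.tau β'' β' ∧ ¬ r β'' β' ∧ r α' β') ∧
     (∀ a, a ≠ Γ.tau → ∀ α', Γ.Step a α α' →
        ∃ β'' β', RelChain (Γ.StepR R Γ.tau) r β (nf R β) β'' ∧
          Γ.StepR R a β'' β' ∧ r α' β'))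

/-- `R`-bisimilarity `≃_R` : the largest `R`-bisimulation. -/
def RBisim (Γ : BPA C A) (R : Set C) (α β : List C) : Prop :=
  ∃ r, Γ.IsRBisim R r ∧ r α β

/-- `Id_R = {X ∈ C : X ≃_R ε}`. -/
def IdR (Γ : BPA C A) (R : Set C) : Set C := {X | Γ.RBisim R [X] []}

/-- `Rd_R(γ) = {X ∈ C : Xγ ≃_R γ}`. -/
def RdR (Γ : BPA C A) (R : Set C) (γ : List C) : Set C :=
  {X | Γ.RBisim R (X :: γ) γ}

/-- An admissible reference set: `R = Id_R`. -/
def Admissible (Γ : BPA C A) (R : Set C) : Prop := R = Γ.IdR R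

end BPA

section Lemmas

open Classical List BPA

variable {C A : Type} {Γ : BPA C A} {R : Set C}

/-! ### Normal form basics -/

lemma nf_nil : nf R ([] : List C) = [] := by simp [nf]

lemma nf_append_R {α j : List C} (hj : ∀ X ∈ j, X ∈ R) :
    nf R (α ++ j) = nf R α := by
  classical
  unfold nf
  rw [List.reverse_append, List.dropWhile_append]
  have hnil : j.reverse.dropWhile (fun X => decide (X ∈ R)) = [] := by
    rw [List.dropWhile_eq_nil_iff]
    intro x hx
    simp only [decide_eq_true_eq]
    exact hj x (List.mem_reverse.mp hx)
  simp [hnil]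

lemma exists_junk (R : Set C) (α : List C) :
    ∃ j, α = nf R α ++ j ∧ ∀ X ∈ j, X ∈ R := by
  classical
  refine ⟨(α.reverse.takeWhile (fun X => decide (X ∈ R))).reverse, ?_, ?_⟩
  · unfold nf
    rw [← List.reverse_append, List.takeWhile_append_dropWhile, List.reverse_reverse]
  · intro X hX
    have := List.mem_takeWhile_imp (List.mem_reverse.mp hX)
    simpa using this

lemma nf_idem (R : Set C) (α : List C) : nf R (nf R α) = nf R α := by
  classical
  obtain ⟨j, hj, hjR⟩ := exists_junk R α
  calc nf R (nf R α) = nf R (nf R α ++ j) := (nf_append_R (R := R) (α := nf R α) hjR).symm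
    _ = nf R α := by rw [← hj]

lemma nf_eq_iff_REq {α β : List C} : REq R α β ↔ nf R α = nf R β := by
  constructor
  · rintro ⟨ζ, a, b, rfl, rfl, ha, hb⟩
    rw [nf_append_R ha, nf_append_R hb]
  · intro h
    obtain ⟨ja, hja, hjaR⟩ := exists_junk R α
    obtain ⟨jb, hjb, hjbR⟩ := exists_junk R β
    exact ⟨nf R α, ja, jb, hja, by rw [h]; exact hjb, hjaR, hjbR⟩

/-- If `ξ` is a nonempty normal form, appending it blocks all trimming. -/
lemma nf_append_nf {g ξ : List C} (hξ : nf R ξ = ξ) (hne : ξ ≠ []) :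
    nf R (g ++ ξ) = g ++ ξ := by
  classical
  unfold nf
  rw [List.reverse_append, List.dropWhile_append]
  have h1 : ξ.reverse.dropWhile (fun X => decide (X ∈ R)) = ξ.reverse := by
    have : (ξ.reverse.dropWhile (fun X => decide (X ∈ R))).reverse = ξ := hξ
    calc ξ.reverse.dropWhile (fun X => decide (X ∈ R))
        = (ξ.reverse.dropWhile (fun X => decide (X ∈ R))).reverse.reverse := by
          rw [List.reverse_reverse]
      _ = ξ.reverse := by rw [this]
  have h2 : (ξ.reverse.dropWhile (fun X => decide (X ∈ R))).isEmpty = false := by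
    rw [h1]
    simpa [List.isEmpty_iff] using hne
  rw [h2]
  simp [h1, List.reverse_append]

end Lemmas
section Lemmas2
open Classical List BPA Relation

variable {C A : Type} {Γ : BPA C A} {R : Set C}

lemma step_append {ℓ : A} {p q s : List C} (h : Γ.Step ℓ p q) :
    Γ.Step ℓ (p ++ s) (q ++ s) := by
  obtain ⟨X, g, b, hr, rfl, rfl⟩ := h
  exact ⟨X, g, b ++ s, hr, by simp, by simp⟩

lemma tauStar_append {p q s : List C} (h : Γ.TauStar p q) :
    Γ.TauStar (p ++ s) (q ++ s) := by
  induction h with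
  | refl => exact ReflTransGen.refl
  | tail _ hstep ih => exact ih.tail (step_append hstep)

lemma ground_append {u s : List C} (hu : Γ.Ground u) (hs : Γ.Ground s) :
    Γ.Ground (u ++ s) := by
  have h1 : Γ.TauStar (u ++ s) ([] ++ s) := tauStar_append hu
  exact (by simpa using h1 : Γ.TauStar (u ++ s) s).trans hs

/-- splitting a silent run to ε of a concatenation -/
lemma ground_split {w : List C} (h : Γ.TauStar w []) :
    ∀ z s, w = z ++ s → Γ.TauStar z [] ∧ Γ.TauStar s [] := by
  induction h using ReflTransGen.head_induction_on with
  | refl =>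
    rintro z s hzs
    rcases List.append_eq_nil_iff.mp hzs.symm with ⟨rfl, rfl⟩
    exact ⟨ReflTransGen.refl, ReflTransGen.refl⟩
  | head hstep htail ih =>
    rintro z s rfl
    rcases z with _ | ⟨Z, z₂⟩
    · have : Γ.TauStar ([] ++ s) [] := ReflTransGen.head hstep htail
      exact ⟨ReflTransGen.refl, by simpa using this⟩
    · obtain ⟨X, g, b, hr, heq, rfl⟩ := hstep
      simp only [List.cons_append, List.cons.injEq] at heq
      obtain ⟨rfl, rfl⟩ := heq
      have hres := ih (g ++ z₂) s (by simp)
      exact ⟨ReflTransGen.head ⟨Z, g, z₂, hr, rfl, rfl⟩ hres.1, hres.2⟩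

lemma ground_of_R (hR : R ⊆ Γ.GroundC) {j : List C} (hj : ∀ X ∈ j, X ∈ R) :
    Γ.Ground j := by
  induction j with
  | nil => exact ReflTransGen.refl
  | cons Y t ih =>
    have hY : Γ.Ground [Y] := hR (hj Y (by simp))
    have ht : Γ.Ground t := ih (fun X hX => hj X (by simp [hX]))
    simpa using ground_append (Γ := Γ) (u := [Y]) (s := t) hY ht

lemma ground_nf_iff (hR : R ⊆ Γ.GroundC) {α : List C} :
    Γ.Ground α ↔ Γ.Ground (nf R α) := by
  obtain ⟨j, hj, hjR⟩ := exists_junk R α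
  constructor
  · intro h
    rw [hj] at h
    exact (ground_split h _ _ rfl).1
  · intro h
    rw [hj]
    exact ground_append h (ground_of_R hR hjR)

lemma stepR_of_step {ℓ : A} {a b : List C} (h : Γ.Step ℓ a b) :
    Γ.StepR R ℓ (nf R a) (nf R b) := ⟨a, b, rfl, rfl, h⟩

lemma stepR_nf {ℓ : A} {w w' : List C} (h : Γ.StepR R ℓ w w') :
    nf R w = w ∧ nf R w' = w' := by
  obtain ⟨a, b, rfl, rfl, _⟩ := h
  exact ⟨nf_idem R a, nf_idem R b⟩

end Lemmas2
section ChainUtil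
open Classical List Relation

variable {C A : Type} {Γ : BPA C A} {R : Set C}

namespace BPA

lemma RelChain.mono' {s : List C → List C → Prop} {r r' : List C → List C → Prop}
    {anchor anchor' x y : List C}
    (hmono : ∀ z, r anchor z → r' anchor' z)
    (h : RelChain s r anchor x y) : RelChain s r' anchor' x y := by
  induction h with
  | refl => exact ReflTransGen.refl
  | tail _ hstep ih => exact ih.tail ⟨hstep.1, hmono _ hstep.2⟩

lemma RelChain.tcat {s : List C → List C → Prop} {r : List C → List C → Prop}
    {anchor x y z : List C}
    (h1 : RelChain s r anchor x y) (h2 : RelChain s r anchor y z) :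
    RelChain s r anchor x z := ReflTransGen.trans h1 h2

lemma RelChain.one {s : List C → List C → Prop} {r : List C → List C → Prop}
    {anchor x y : List C} (hs : s x y) (hr : r anchor y) :
    RelChain s r anchor x y := ReflTransGen.single ⟨hs, hr⟩

lemma RelChain.last_rel {s : List C → List C → Prop} {r : List C → List C → Prop}
    {anchor x y : List C} (h : RelChain s r anchor x y) (hx : r anchor x) :
    r anchor y := by
  induction h with
  | refl => exact hx
  | tail _ hstep _ => exact hstep.2

lemma RelChain.nf_end {T : List C → List C → Prop} {Aa s w : List C} {ℓ : A}
    (h : RelChain (Γ.StepR R ℓ) T Aa s w) (hs : nf R s = s) :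
    nf R w = w := by
  induction h with
  | refl => exact hs
  | tail _ hstep _ => exact (stepR_nf hstep.1).2

end BPA

/-- projecting a real silent run to a chain of R-steps, with anchor side conditions -/
lemma chain_of_run {T : List C → List C → Prop} {Aa p q : List C}
    (h : Γ.TauStar p q)
    (hanch : ∀ y, Γ.TauStar p y → Γ.TauStar y q → T Aa (BPA.nf R y)) :
    BPA.RelChain (Γ.StepR R Γ.tau) T Aa (BPA.nf R p) (BPA.nf R q) := by
  induction h using ReflTransGen.head_induction_on with
  | refl => exact ReflTransGen.refl
  | @head a c hstep htail ih =>
    refine ReflTransGen.head ⟨stepR_of_step hstep, ?_⟩ (ih ?_)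
    · exact hanch c (ReflTransGen.single hstep) htail
    · intro y h1 h2
      exact hanch y (ReflTransGen.head hstep h1) h2

end ChainUtil
section Transfer
open Classical List BPA Relation

variable {C A : Type} {Γ : BPA C A} {R : Set C}

/-- ambient relation facts -/
structure Amb (Γ : BPA C A) (R : Set C) (T : List C → List C → Prop) : Prop where
  symm : ∀ {x y}, T x y → T y x
  trans : ∀ {x y z}, T x y → T y z → T x z
  req : ∀ {x y}, REq R x y → T x y

namespace Amb
variable {T : List C → List C → Prop}

lemma rfl' (hT : Amb Γ R T) (x : List C) : T x x :=
  hT.req ⟨x, [], [], by simp, by simp, by simp, by simp⟩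

lemma nfrel (hT : Amb Γ R T) (x : List C) : T x (nf R x) :=
  hT.req (nf_eq_iff_REq.mpr (nf_idem R x).symm)

end Amb

/-- A "tau package" from `μ` responding to `α'`, relative to ambient relation `T`
and anchor `Aa`. -/
def PkgT (Γ : BPA C A) (R : Set C) (T : List C → List C → Prop)
    (Aa α' μ : List C) : Prop :=
  ∃ w, RelChain (Γ.StepR R Γ.tau) T Aa (nf R μ) w ∧
    (T α' w ∨ ∃ w', Γ.StepR R Γ.tau w w' ∧ T α' w')

/-- A visible package. -/
def PkgV (Γ : BPA C A) (R : Set C) (T : List C → List C → Prop)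
    (Aa : List C) (a : A) (α' μ : List C) : Prop :=
  ∃ w w', RelChain (Γ.StepR R Γ.tau) T Aa (nf R μ) w ∧
    Γ.StepR R a w w' ∧ T α' w'

/-- transfer property of a pair wrt the ambient relation -/
def Transfers (Γ : BPA C A) (R : Set C) (T : List C → List C → Prop)
    (x y : List C) : Prop :=
  (Γ.TauStar x [] → Γ.TauStar y []) ∧
  (∀ Aa α', T Aa x → PkgT Γ R T Aa α' x → PkgT Γ R T Aa α' y) ∧
  (∀ Aa a α', a ≠ Γ.tau → T Aa x → PkgV Γ R T Aa a α' x → PkgV Γ R T Aa a α' y)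

variable {T : List C → List C → Prop}

section BisimLink
variable {r : List C → List C → Prop}

lemma chainSim (hT : Amb Γ R T) (hb : Γ.IsRBisim R r)
    (hrT : ∀ {x y}, r x y → T x y) {Aa w w'' : List C}
    (hchain : RelChain (Γ.StepR R Γ.tau) T Aa w w'') :
    ∀ {z : List C}, r w z → nf R w = w → nf R z = z → T Aa z →
    ∃ z'', RelChain (Γ.StepR R Γ.tau) T Aa z z'' ∧ r w'' z'' ∧
      nf R z'' = z'' ∧ T Aa z'' := by
  induction hchain using ReflTransGen.head_induction_on with
  | refl =>
    intro z hrz _ hnz hAz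
    exact ⟨z, ReflTransGen.refl, hrz, hnz, hAz⟩
  | @head w w₁ hstep htail ih =>
    intro z hrz hnw hnz hAz
    obtain ⟨hsR, hAw₁⟩ := hstep
    obtain ⟨a, b, hwa, hw₁b, hab⟩ := hsR
    have hnw₁ : nf R w₁ = w₁ := by rw [hw₁b]; exact nf_idem R b
    have hraw : r a w := hb.2.1 a w (nf_eq_iff_REq.mpr (by rw [← hwa, hnw]))
    have hra : r a z := hb.1.trans hraw hrz
    have hrw₁b : r w₁ b := hb.2.1 w₁ b (nf_eq_iff_REq.mpr (by rw [hnw₁, hw₁b]))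
    by_cases hint : r a b
    · have hrw₁z : r w₁ z :=
        hb.1.trans hrw₁b (hb.1.trans (hb.1.symm hint) hra)
      exact ih hrw₁z hnw₁ hnz hAz
    · obtain ⟨z₁'', z₁', hrchain, hstep', hne, hrel⟩ :=
        ((hb.2.2 a z hra).2.1) b hab hint
      rw [hnz] at hrchain
      have hchain' : RelChain (Γ.StepR R Γ.tau) T Aa z z₁'' :=
        hrchain.mono' (fun y hy => hT.trans hAz (hrT hy))
      have hAz₁' : T Aa z₁' :=
        hT.trans hAw₁ (hT.trans (hrT hrw₁b) (hrT hrel))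
      have hchain'' : RelChain (Γ.StepR R Γ.tau) T Aa z z₁' :=
        hchain'.tcat (RelChain.one hstep' hAz₁')
      have hrw₁z₁' : r w₁ z₁' := hb.1.trans hrw₁b hrel
      have hnz₁' : nf R z₁' = z₁' := (stepR_nf hstep').2
      obtain ⟨z'', hc, hr'', hn'', hA''⟩ := ih hrw₁z₁' hnw₁ hnz₁' hAz₁'
      exact ⟨z'', hchain''.tcat hc, hr'', hn'', hA''⟩

lemma bisim_final_tau (hT : Amb Γ R T) (hb : Γ.IsRBisim R r)
    (hrT : ∀ {x y}, r x y → T x y) {Aa w z w' : List C}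
    (hrz : r w z) (hnw : nf R w = w) (hnz : nf R z = z) (hAz : T Aa z)
    (hstep : Γ.StepR R Γ.tau w w') :
    ∃ z₂, RelChain (Γ.StepR R Γ.tau) T Aa z z₂ ∧
      (r w' z₂ ∨ ∃ z', Γ.StepR R Γ.tau z₂ z' ∧ r w' z') := by
  obtain ⟨a, b, hwa, hw'b, hab⟩ := hstep
  have hra : r a z :=
    hb.1.trans (hb.2.1 a w (nf_eq_iff_REq.mpr (by rw [← hwa, hnw]))) hrz
  have hw'b' : r w' b := hb.2.1 w' b (nf_eq_iff_REq.mpr (by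
    rw [hw'b, nf_idem]))
  by_cases hint : r a b
  · exact ⟨z, ReflTransGen.refl,
      Or.inl (hb.1.trans hw'b' (hb.1.trans (hb.1.symm hint) hra))⟩
  · obtain ⟨z'', z', hrchain, hstep', _, hrel⟩ := ((hb.2.2 a z hra).2.1) b hab hint
    rw [hnz] at hrchain
    exact ⟨z'', hrchain.mono' (fun y hy => hT.trans hAz (hrT hy)),
      Or.inr ⟨z', hstep', hb.1.trans hw'b' hrel⟩⟩

lemma bisim_final_vis (hT : Amb Γ R T) (hb : Γ.IsRBisim R r)
    (hrT : ∀ {x y}, r x y → T x y) {Aa w z w' : List C} {a : A} (hna : a ≠ Γ.tau)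
    (hrz : r w z) (hnw : nf R w = w) (hnz : nf R z = z) (hAz : T Aa z)
    (hstep : Γ.StepR R a w w') :
    ∃ z₂ z', RelChain (Γ.StepR R Γ.tau) T Aa z z₂ ∧
      Γ.StepR R a z₂ z' ∧ r w' z' := by
  obtain ⟨p, q, hwp, hw'q, hpq⟩ := hstep
  have hrp : r p z :=
    hb.1.trans (hb.2.1 p w (nf_eq_iff_REq.mpr (by rw [← hwp, hnw]))) hrz
  have hw'q' : r w' q := hb.2.1 w' q (nf_eq_iff_REq.mpr (by rw [hw'q, nf_idem]))
  obtain ⟨z'', z', hrchain, hstep', hrel⟩ := ((hb.2.2 p z hrp).2.2) a hna q hpq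
  rw [hnz] at hrchain
  exact ⟨z'', z', hrchain.mono' (fun y hy => hT.trans hAz (hrT hy)), hstep',
    hb.1.trans hw'q' hrel⟩

lemma bisim_link_transfers (hT : Amb Γ R T) (hb : Γ.IsRBisim R r)
    (hrT : ∀ {x y}, r x y → T x y) {x y : List C} (hxy : r x y) :
    Transfers Γ R T x y := by
  have hrnf : r (nf R x) (nf R y) := by
    refine hb.1.trans ?_ (hb.1.trans hxy ?_)
    · exact hb.1.symm (hb.2.1 x (nf R x) (nf_eq_iff_REq.mpr (nf_idem R x).symm))
    · exact hb.2.1 y (nf R y) (nf_eq_iff_REq.mpr (nf_idem R y).symm)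
  refine ⟨(hb.2.2 x y hxy).1, ?_, ?_⟩
  · rintro Aa α' hAx ⟨w, hchain, hrest⟩
    have hAny : T Aa (nf R y) :=
      hT.trans hAx (hT.trans (hrT hxy) (hT.nfrel y))
    obtain ⟨z'', hc, hrw, hnz'', hAz''⟩ :=
      chainSim hT hb hrT hchain hrnf (nf_idem R x) (nf_idem R y) hAny
    have hnw : nf R w = w := hchain.nf_end (nf_idem R x)
    rcases hrest with hstay | ⟨w', hstep, hrelw'⟩
    · exact ⟨z'', hc, Or.inl (hT.trans hstay (hrT hrw))⟩
    · obtain ⟨z₂, hc₂, hres⟩ := bisim_final_tau hT hb hrT hrw hnw hnz'' hAz'' hstep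
      rcases hres with hstay2 | ⟨z', hstep', hrel'⟩
      · exact ⟨z₂, hc.tcat hc₂, Or.inl (hT.trans hrelw' (hrT hstay2))⟩
      · exact ⟨z₂, hc.tcat hc₂, Or.inr ⟨z', hstep', hT.trans hrelw' (hrT hrel')⟩⟩
  · rintro Aa a α' hna hAx ⟨w, w', hchain, hstep, hrelw'⟩
    have hAny : T Aa (nf R y) :=
      hT.trans hAx (hT.trans (hrT hxy) (hT.nfrel y))
    obtain ⟨z'', hc, hrw, hnz'', hAz''⟩ :=
      chainSim hT hb hrT hchain hrnf (nf_idem R x) (nf_idem R y) hAny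
    have hnw : nf R w = w := hchain.nf_end (nf_idem R x)
    obtain ⟨z₂, z', hc₂, hstep', hrel'⟩ :=
      bisim_final_vis hT hb hrT hna hrw hnw hnz'' hAz'' hstep
    exact ⟨z₂, z', hc.tcat hc₂, hstep', hT.trans hrelw' (hrT hrel')⟩

end BisimLink
end Transfer
section BasicBisims
open Classical List BPA Relation

variable {C A : Type} {Γ : BPA C A} {R : Set C}

lemma isRBisim_nfEq (hR : R ⊆ Γ.GroundC) :
    Γ.IsRBisim R (fun a b => nf R a = nf R b) := by
  refine ⟨⟨fun x => rfl, Eq.symm, Eq.trans⟩, fun α β h => nf_eq_iff_REq.mp h, ?_⟩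
  intro α β h
  refine ⟨?_, ?_, ?_⟩
  · intro hg
    exact (ground_nf_iff hR).mpr (h ▸ (ground_nf_iff hR).mp hg)
  · intro α' hstep hne
    refine ⟨nf R β, nf R α', ReflTransGen.refl, ⟨α, α', h.symm, rfl, hstep⟩, ?_, ?_⟩
    · simpa [nf_idem, ← h] using hne
    · exact (nf_idem R α').symm
  · intro a _ α' hstep
    exact ⟨nf R β, nf R α', ReflTransGen.refl, ⟨α, α', h.symm, rfl, hstep⟩,
      (nf_idem R α').symm⟩

/-- ground states whose normal form is silently reachable (up to an `R`-junk
suffix) from a stack of `R`-constants -/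
def Mset (Γ : BPA C A) (R : Set C) (p : List C) : Prop :=
  Γ.Ground p ∧ ∃ u j, (∀ X ∈ u, X ∈ R) ∧ (∀ X ∈ j, X ∈ R) ∧
    Γ.TauStar u (nf R p ++ j)

/-- the corresponding candidate `R`-bisimulation -/
def rM (Γ : BPA C A) (R : Set C) (p q : List C) : Prop :=
  (Mset Γ R p ∧ Mset Γ R q) ∨ nf R p = nf R q

lemma nf_of_allR {u : List C} (hu : ∀ X ∈ u, X ∈ R) : nf R u = [] := by
  have := nf_append_R (R := R) (α := ([] : List C)) hu
  simpa [nf_nil] using this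

lemma Mset_congr (hR : R ⊆ Γ.GroundC) {p q : List C} (h : nf R p = nf R q)
    (hp : Mset Γ R p) : Mset Γ R q := by
  obtain ⟨hg, u, j, hu, hj, hrun⟩ := hp
  exact ⟨(ground_nf_iff hR).mpr (h ▸ (ground_nf_iff hR).mp hg),
    u, j, hu, hj, h ▸ hrun⟩

lemma rM_equiv (hR : R ⊆ Γ.GroundC) : Equivalence (rM Γ R) := by
  refine ⟨fun x => Or.inr rfl, ?_, ?_⟩
  · rintro x y (⟨h1, h2⟩ | h)
    exacts [Or.inl ⟨h2, h1⟩, Or.inr h.symm]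
  · rintro x y z (⟨h1, h2⟩ | h) (⟨h3, h4⟩ | h')
    · exact Or.inl ⟨h1, h4⟩
    · exact Or.inl ⟨h1, Mset_congr hR h' h2⟩
    · exact Or.inl ⟨Mset_congr hR h.symm h3, h4⟩
    · exact Or.inr (h.trans h')

lemma rM_nf_invar {p q : List C} (hR : R ⊆ Γ.GroundC) :
    rM Γ R (nf R p) (nf R q) ↔ rM Γ R p q := by
  unfold rM
  rw [nf_idem, nf_idem]
  constructor <;> rintro (⟨h1, h2⟩ | h) <;>
    [exact Or.inl ⟨Mset_congr hR (nf_idem R p) h1, Mset_congr hR (nf_idem R q) h2⟩;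
     exact Or.inr h;
     exact Or.inl ⟨Mset_congr hR (nf_idem R p).symm h1,
       Mset_congr hR (nf_idem R q).symm h2⟩;
     exact Or.inr h]

/-- the drain chain: any `Mset` state can silently `R`-step (within the class)
down to `[]`. -/
lemma drain_chain (hR : R ⊆ Γ.GroundC) {q β : List C} (hq : Mset Γ R q)
    (hβ : Mset Γ R β) :
    RelChain (Γ.StepR R Γ.tau) (rM Γ R) β (nf R q) [] := by
  have hg : Γ.Ground (nf R q) := (ground_nf_iff hR).mp hq.1
  have h := chain_of_run (Γ := Γ) (R := R) (T := rM Γ R) (Aa := β)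
    (p := nf R q) (q := []) hg ?_
  · simpa [nf_idem, nf_nil] using h
  · intro y h1 h2
    refine Or.inl ⟨hβ, ?_, ?_⟩
    · exact (ground_nf_iff hR).mp h2
    · obtain ⟨hgq, u, j, hu, hj, hrun⟩ := hq
      obtain ⟨jy, hjy, hjyR⟩ := exists_junk R y
      refine ⟨u, jy ++ j, hu, ?_, ?_⟩
      · intro X hX
        rcases List.mem_append.mp hX with h | h
        exacts [hjyR X h, hj X h]
      · have h3 : Γ.TauStar (nf R q ++ j) (y ++ j) := tauStar_append h1
        have : y ++ j = nf R (nf R y) ++ (jy ++ j) := by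
          rw [nf_idem, ← List.append_assoc, ← hjy]
        exact this ▸ hrun.trans h3
  -- done
/-- the replay chain: from `[]` back up to the normal form of an `Mset` state. -/
lemma replay_chain (hR : R ⊆ Γ.GroundC) {p β : List C} (hp : Mset Γ R p)
    (hβ : Mset Γ R β) :
    RelChain (Γ.StepR R Γ.tau) (rM Γ R) β [] (nf R p) := by
  obtain ⟨hg, u, j, hu, hj, hrun⟩ := hp
  have h := chain_of_run (Γ := Γ) (R := R) (T := rM Γ R) (Aa := β)
    (p := u) (q := nf R p ++ j) hrun ?_
  · rw [nf_of_allR hu, nf_append_R hj, nf_idem] at h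
    exact h
  · intro y h1 h2
    refine Or.inl ⟨hβ, ?_, ?_⟩
    · have hgy : Γ.Ground y := by
        have hto : Γ.Ground (nf R p ++ j) :=
          ground_append ((ground_nf_iff hR).mp hg) (ground_of_R hR hj)
        exact h2.trans hto
      exact (ground_nf_iff hR).mp hgy
    · obtain ⟨jy, hjy, hjyR⟩ := exists_junk R y
      exact ⟨u, jy, hu, hjyR, by rw [nf_idem, ← hjy]; exact h1⟩

lemma isRBisim_rM (hR : R ⊆ Γ.GroundC) : Γ.IsRBisim R (rM Γ R) := by
  refine ⟨rM_equiv hR, fun α β h => Or.inr (nf_eq_iff_REq.mp h), ?_⟩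
  intro α β hab
  rcases hab with ⟨hMα, hMβ⟩ | heq
  · refine ⟨fun _ => hMβ.1, ?_, ?_⟩
    · intro α' hstep hne
      refine ⟨nf R α, nf R α', (drain_chain hR hMβ hMβ).tcat
        (replay_chain hR hMα hMβ), ⟨α, α', rfl, rfl, hstep⟩, ?_, ?_⟩
      · intro hcon
        exact hne ((rM_nf_invar hR).mp hcon)
      · exact Or.inr (nf_idem R α').symm
    · intro a _ α' hstep
      exact ⟨nf R α, nf R α', (drain_chain hR hMβ hMβ).tcat
        (replay_chain hR hMα hMβ), ⟨α, α', rfl, rfl, hstep⟩,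
        Or.inr (nf_idem R α').symm⟩
  · refine ⟨?_, ?_, ?_⟩
    · intro hg
      exact (ground_nf_iff hR).mpr (heq ▸ (ground_nf_iff hR).mp hg)
    · intro α' hstep hne
      refine ⟨nf R β, nf R α', ReflTransGen.refl, ⟨α, α', heq.symm, rfl, hstep⟩, ?_, ?_⟩
      · intro hcon
        have : rM Γ R (nf R α) (nf R α') := heq ▸ hcon
        exact hne ((rM_nf_invar hR).mp this)
      · exact Or.inr (nf_idem R α').symm
    · intro a _ α' hstep
      exact ⟨nf R β, nf R α', ReflTransGen.refl, ⟨α, α', heq.symm, rfl, hstep⟩,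
        Or.inr (nf_idem R α').symm⟩

end BasicBisims
section Mirror
open Classical List BPA Relation

variable {C A : Type} {Γ : BPA C A} {R : Set C}
variable {ξa ξb : List C} {T : List C → List C → Prop}

/-- the two-phase simulation invariant for mirror pairs -/
def QInv (Γ : BPA C A) (R : Set C) (ξa ξb : List C)
    (r2 : List C → List C → Prop) (w z : List C) : Prop :=
  nf R w = w ∧ nf R z = z ∧
    ((∃ g, w = nf R (g ++ ξa) ∧ z = nf R (g ++ ξb)) ∨ r2 w z)

variable {r2 : List C → List C → Prop}

lemma QInv_T (hT : Amb Γ R T) (hMir : ∀ p, T (p ++ ξa) (p ++ ξb))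
    (hbT : ∀ r, Γ.IsRBisim R r → ∀ x y, r x y → T x y) (hb2 : Γ.IsRBisim R r2)
    {w z : List C} (hQ : QInv Γ R ξa ξb r2 w z) : T w z := by
  obtain ⟨hnw, hnz, (⟨g, rfl, rfl⟩ | hr)⟩ := hQ
  · exact hT.trans (hT.symm (hT.nfrel _)) (hT.trans (hMir g) (hT.nfrel _))
  · exact hbT r2 hb2 _ _ hr

/-- draining an all-`R` prefix above `ξb`, staying anchored. -/
lemma wall_drain (hT : Amb Γ R T) (hR : R ⊆ Γ.GroundC)
    {Aa : List C} (hAst : ∀ y, Mset Γ R y → T Aa (nf R (y ++ ξb))) :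
    ∀ {g : List C}, Γ.TauStar g [] → (∃ u, (∀ X ∈ u, X ∈ R) ∧ Γ.TauStar u g) →
    RelChain (Γ.StepR R Γ.tau) T Aa (nf R (g ++ ξb)) (nf R ξb) := by
  intro g hrun hseed
  induction hrun using ReflTransGen.head_induction_on with
  | refl => exact ReflTransGen.refl
  | @head gc gn hstep htail ih =>
    refine ReflTransGen.head ⟨stepR_of_step (step_append hstep), ?_⟩ ?_
    · refine hAst gn ⟨htail, ?_⟩
      obtain ⟨u, hu, hur⟩ := hseed
      obtain ⟨j, hj, hjR⟩ := exists_junk R gn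
      exact ⟨u, j, hu, hjR, by rw [← hj]; exact hur.tail hstep⟩
    · obtain ⟨u, hu, hur⟩ := hseed
      exact ih ⟨u, hu, hur.tail hstep⟩

/-- the core single-step transfer across a mirror pair -/
lemma mirror_core (hR : R ⊆ Γ.GroundC)
    (hξa : nf R ξa = ξa) (hξb : nf R ξb = ξb)
    (hb2 : Γ.IsRBisim R r2) (hr2 : r2 ξa ξb) (hT : Amb Γ R T)
    (hbT : ∀ r, Γ.IsRBisim R r → ∀ x y, r x y → T x y)
    (hMir : ∀ p, T (p ++ ξa) (p ++ ξb))
    {Aa w z w' : List C} {ℓ : A}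
    (hQ : QInv Γ R ξa ξb r2 w z) (hAz : T Aa z) (hstep : Γ.StepR R ℓ w w') :
    ∃ zc, RelChain (Γ.StepR R Γ.tau) T Aa z zc ∧
      ((ℓ = Γ.tau ∧ T w' zc ∧ QInv Γ R ξa ξb r2 w' zc) ∨
       (∃ z', Γ.StepR R ℓ zc z' ∧ T w' z' ∧ QInv Γ R ξa ξb r2 w' z')) := by
  obtain ⟨hnw, hnz, hform⟩ := hQ
  obtain ⟨a, b, haw, hbw', hab⟩ := hstep
  have hnw' : nf R w' = w' := by rw [hbw']; exact nf_idem R b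
  -- the phase-2 handler
  have phase2 : r2 w z → ∃ zc, RelChain (Γ.StepR R Γ.tau) T Aa z zc ∧
      ((ℓ = Γ.tau ∧ T w' zc ∧ QInv Γ R ξa ξb r2 w' zc) ∨
       (∃ z', Γ.StepR R ℓ zc z' ∧ T w' z' ∧ QInv Γ R ξa ξb r2 w' z')) := by
    intro hr
    by_cases hl : ℓ = Γ.tau
    · subst hl
      obtain ⟨z₂, hc, hres⟩ := bisim_final_tau hT hb2
        (fun {x y} hxy => hbT r2 hb2 x y hxy) hr hnw hnz hAz ⟨a, b, haw, hbw', hab⟩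
      have hnz₂ : nf R z₂ = z₂ := hc.nf_end hnz
      rcases hres with hstay | ⟨z', hstep', hrel'⟩
      · exact ⟨z₂, hc, Or.inl ⟨rfl, hbT r2 hb2 _ _ hstay,
          hnw', hnz₂, Or.inr hstay⟩⟩
      · exact ⟨z₂, hc, Or.inr ⟨z', hstep', hbT r2 hb2 _ _ hrel',
          hnw', (stepR_nf hstep').2, Or.inr hrel'⟩⟩
    · obtain ⟨z₂, z', hc, hstep', hrel'⟩ := bisim_final_vis hT hb2
        (fun {x y} hxy => hbT r2 hb2 x y hxy) hl hr hnw hnz hAz ⟨a, b, haw, hbw', hab⟩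
      exact ⟨z₂, hc, Or.inr ⟨z', hstep', hbT r2 hb2 _ _ hrel',
        hnw', (stepR_nf hstep').2, Or.inr hrel'⟩⟩
  rcases hform with ⟨g, hw, hz⟩ | hr
  · by_cases hxa : ξa = []
    · subst hxa
      rcases hng : nf R g with _ | ⟨Z, t⟩
      · -- the wall: w = [] after simplification
        have hwnil : w = [] := by
          rw [hw, List.append_nil, hng]
        obtain ⟨jg, hjg, hjgR⟩ := exists_junk R g
        have hgR : ∀ X ∈ g, X ∈ R := by
          rw [hjg, hng]
          simpa using hjgR
        have hMset_g : Mset Γ R g :=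
          ⟨ground_of_R hR hgR, g, jg, hgR, hjgR, by
            rw [← hjg]; exact ReflTransGen.refl⟩
        have hAst : ∀ y, Mset Γ R y → T Aa (nf R (y ++ ξb)) := by
          intro y hy
          refine hT.trans hAz ?_
          have h1 : T z (g ++ ξb) := by rw [hz]; exact hT.symm (hT.nfrel _)
          have h2 : T (g ++ ξb) g := by
            have := hT.symm (hMir g)
            simpa using this
          have h3 : T g y := hbT _ (isRBisim_rM hR) _ _ (Or.inl ⟨hMset_g, hy⟩)
          have h4 : T y (y ++ ξb) := by
            have := hMir y
            simpa using this
          exact hT.trans h1 (hT.trans h2 (hT.trans h3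
            (hT.trans h4 (hT.nfrel _))))
        have hdrain : RelChain (Γ.StepR R Γ.tau) T Aa (nf R (g ++ ξb)) (nf R ξb) :=
          wall_drain hT hR hAst (ground_of_R hR hgR)
            ⟨g, hgR, ReflTransGen.refl⟩
        have hr2' : r2 w ξb := by
          rw [hwnil]; exact hr2
        have hAξb : T Aa ξb := by
          rw [← hξb]
          exact RelChain.last_rel hdrain (by rw [← hz]; exact hAz)
        -- now run phase 2 from ξb
        by_cases hl : ℓ = Γ.tau
        · subst hl
          obtain ⟨z₂, hc, hres⟩ := bisim_final_tau hT hb2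
            (fun {x y} hxy => hbT r2 hb2 x y hxy) hr2' hnw hξb hAξb
            ⟨a, b, haw, hbw', hab⟩
          have hdrain' : RelChain (Γ.StepR R Γ.tau) T Aa z z₂ := by
            rw [hz]
            exact (hξb ▸ hdrain).tcat hc
          have hnz₂ : nf R z₂ = z₂ := hc.nf_end hξb
          rcases hres with hstay | ⟨z', hstep', hrel'⟩
          · exact ⟨z₂, hdrain', Or.inl ⟨rfl, hbT r2 hb2 _ _ hstay,
              hnw', hnz₂, Or.inr hstay⟩⟩
          · exact ⟨z₂, hdrain', Or.inr ⟨z', hstep', hbT r2 hb2 _ _ hrel',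
              hnw', (stepR_nf hstep').2, Or.inr hrel'⟩⟩
        · obtain ⟨z₂, z', hc, hstep', hrel'⟩ := bisim_final_vis hT hb2
            (fun {x y} hxy => hbT r2 hb2 x y hxy) hl hr2' hnw hξb hAξb
            ⟨a, b, haw, hbw', hab⟩
          refine ⟨z₂, ?_, Or.inr ⟨z', hstep', hbT r2 hb2 _ _ hrel',
            hnw', (stepR_nf hstep').2, Or.inr hrel'⟩⟩
          rw [hz]
          exact (hξb ▸ hdrain).tcat hc
      · -- mirror through the head `Z` of `nf g`
        obtain ⟨ja, hja, hjaR⟩ := exists_junk R a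
        have haform : a = Z :: (t ++ ja) := by
          conv_lhs => rw [hja, ← haw, hw]
          simp [hng]
        obtain ⟨X, μ, rest, hrule, hXa, hb⟩ := hab
        rw [haform] at hXa
        injection hXa with h1 h2
        have hXZ : X = Z := h1.symm
        have hrest : rest = t ++ ja := h2.symm
        obtain ⟨jg, hjg, hjgR⟩ := exists_junk R g
        -- the mirrored step on the `ξb` side
        have hstep₂ : Γ.Step ℓ (g ++ ξb) ((μ ++ t ++ jg) ++ ξb) := by
          refine ⟨Z, μ, t ++ jg ++ ξb, hXZ ▸ hrule, ?_, by simp⟩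
          rw [hjg, hng]
          simp
        set g'' : List C := μ ++ t ++ jg with hg''
        have hw'' : w' = nf R (g'' ++ []) := by
          rw [hbw', hb, hrest, hg'']
          simp only [List.append_nil]
          calc nf R (μ ++ (t ++ ja)) = nf R ((μ ++ t) ++ ja) := by
                rw [List.append_assoc]
            _ = nf R (μ ++ t) := nf_append_R hjaR
            _ = nf R ((μ ++ t) ++ jg) := (nf_append_R hjgR).symm
            _ = nf R (μ ++ t ++ jg) := rfl
        refine ⟨z, ReflTransGen.refl, Or.inr ⟨nf R (g'' ++ ξb), ?_, ?_, ?_⟩⟩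
        · exact ⟨g ++ ξb, g'' ++ ξb, by rw [hz], by simp [hg''], hstep₂⟩
        · rw [hw'']
          exact hT.trans (hT.symm (hT.nfrel _)) (hT.trans (hMir g'') (hT.nfrel _))
        · exact ⟨hnw', nf_idem R _, Or.inl ⟨g'', hw'', rfl⟩⟩
    · -- ξa ≠ []
      have hwform : w = g ++ ξa := by rw [hw]; exact nf_append_nf hξa hxa
      rcases g with _ | ⟨Z, g₂⟩
      · -- the step happens inside ξa : switch to phase 2
        have hr' : r2 w z := by
          have hwa : w = ξa := by simpa using hwform
          have hzb : z = ξb := by rw [hz]; simpa using hξb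
          rw [hwa, hzb]; exact hr2
        exact phase2 hr'
      · -- mirror through the head `Z` of `g`
        obtain ⟨ja, hja, hjaR⟩ := exists_junk R a
        have haform : a = Z :: (g₂ ++ ξa ++ ja) := by
          conv_lhs => rw [hja, ← haw, hwform]
          simp [List.append_assoc]
        obtain ⟨X, μ, rest, hrule, hXa, hb⟩ := hab
        rw [haform] at hXa
        injection hXa with h1 h2
        have hXZ : X = Z := h1.symm
        have hrest : rest = g₂ ++ ξa ++ ja := h2.symm
        have hstep₂ : Γ.Step ℓ ((Z :: g₂) ++ ξb) ((μ ++ g₂) ++ ξb) := by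
          refine ⟨Z, μ, g₂ ++ ξb, hXZ ▸ hrule, by simp, by simp⟩
        have hw'' : w' = nf R ((μ ++ g₂) ++ ξa) := by
          rw [hbw', hb, hrest]
          calc nf R (μ ++ (g₂ ++ ξa ++ ja)) = nf R ((μ ++ g₂ ++ ξa) ++ ja) := by
                simp [List.append_assoc]
            _ = nf R (μ ++ g₂ ++ ξa) := nf_append_R hjaR
        refine ⟨z, ReflTransGen.refl, Or.inr ⟨nf R ((μ ++ g₂) ++ ξb), ?_, ?_, ?_⟩⟩
        · exact ⟨(Z :: g₂) ++ ξb, (μ ++ g₂) ++ ξb, by rw [hz], rfl, hstep₂⟩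
        · rw [hw'']
          exact hT.trans (hT.symm (hT.nfrel _)) (hT.trans (hMir _) (hT.nfrel _))
        · exact ⟨hnw', nf_idem R _, Or.inl ⟨μ ++ g₂, hw'', rfl⟩⟩
  · exact phase2 hr

end Mirror

section MirrorResp
open Classical List BPA Relation

variable {C A : Type} {Γ : BPA C A} {R : Set C}
variable {ξa ξb : List C} {T : List C → List C → Prop}
variable {r2 : List C → List C → Prop}

lemma mirrorChainSim (hR : R ⊆ Γ.GroundC)
    (hξa : nf R ξa = ξa) (hξb : nf R ξb = ξb)
    (hb2 : Γ.IsRBisim R r2) (hr2 : r2 ξa ξb) (hT : Amb Γ R T)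
    (hbT : ∀ r, Γ.IsRBisim R r → ∀ x y, r x y → T x y)
    (hMir : ∀ p, T (p ++ ξa) (p ++ ξb))
    {Aa w w'' : List C} (hchain : RelChain (Γ.StepR R Γ.tau) T Aa w w'') :
    ∀ {z}, QInv Γ R ξa ξb r2 w z → T Aa z →
    ∃ zc, RelChain (Γ.StepR R Γ.tau) T Aa z zc ∧ QInv Γ R ξa ξb r2 w'' zc ∧
      T Aa zc := by
  induction hchain using ReflTransGen.head_induction_on with
  | refl =>
    intro z hQ hAz
    exact ⟨z, ReflTransGen.refl, hQ, hAz⟩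
  | @head w w₁ hstep htail ih =>
    intro z hQ hAz
    obtain ⟨hsR, hAw₁⟩ := hstep
    obtain ⟨zc, hc, hbr⟩ := mirror_core hR hξa hξb hb2 hr2 hT hbT hMir hQ hAz hsR
    rcases hbr with ⟨-, hTw₁zc, hQ'⟩ | ⟨z', hstepz, hTw₁z', hQ'⟩
    · obtain ⟨zc₂, hc₂, hQ₂, hA₂⟩ := ih hQ' (RelChain.last_rel hc hAz)
      exact ⟨zc₂, hc.tcat hc₂, hQ₂, hA₂⟩
    · have hAz' : T Aa z' := hT.trans hAw₁ hTw₁z'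
      obtain ⟨zc₂, hc₂, hQ₂, hA₂⟩ := ih hQ' hAz'
      exact ⟨zc₂, (hc.tcat (RelChain.one hstepz hAz')).tcat hc₂, hQ₂, hA₂⟩

/-- transfer across a mirror link -/
lemma mirror_transfers' (hR : R ⊆ Γ.GroundC)
    (hξa : nf R ξa = ξa) (hξb : nf R ξb = ξb)
    (hb2 : Γ.IsRBisim R r2) (hr2 : r2 ξa ξb) (hT : Amb Γ R T)
    (hbT : ∀ r, Γ.IsRBisim R r → ∀ x y, r x y → T x y)
    (hMir : ∀ p, T (p ++ ξa) (p ++ ξb)) (p : List C) :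
    Transfers Γ R T (p ++ ξa) (p ++ ξb) := by
  refine ⟨?_, ?_, ?_⟩
  · intro hg
    obtain ⟨hgp, hga⟩ := ground_split hg p ξa rfl
    exact ground_append hgp ((hb2.2.2 ξa ξb hr2).1 hga)
  · rintro Aa α' hAx ⟨w, hchain, hrest⟩
    have hQ₀ : QInv Γ R ξa ξb r2 (nf R (p ++ ξa)) (nf R (p ++ ξb)) :=
      ⟨nf_idem R _, nf_idem R _, Or.inl ⟨p, rfl, rfl⟩⟩
    have hAz₀ : T Aa (nf R (p ++ ξb)) :=
      hT.trans hAx (hT.trans (hMir p) (hT.nfrel _))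
    obtain ⟨zc, hc, hQc, hAzc⟩ :=
      mirrorChainSim hR hξa hξb hb2 hr2 hT hbT hMir hchain hQ₀ hAz₀
    rcases hrest with hstay | ⟨w', hstep, hrelw'⟩
    · exact ⟨zc, hc, Or.inl (hT.trans hstay (QInv_T hT hMir hbT hb2 hQc))⟩
    · obtain ⟨zc₂, hc₂, hbr⟩ :=
        mirror_core hR hξa hξb hb2 hr2 hT hbT hMir hQc hAzc hstep
      rcases hbr with ⟨-, hTw', _⟩ | ⟨z', hstepz, hTw'z', _⟩
      · exact ⟨zc₂, hc.tcat hc₂, Or.inl (hT.trans hrelw' hTw')⟩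
      · exact ⟨zc₂, hc.tcat hc₂, Or.inr ⟨z', hstepz, hT.trans hrelw' hTw'z'⟩⟩
  · rintro Aa a α' hna hAx ⟨w, w', hchain, hstep, hrelw'⟩
    have hQ₀ : QInv Γ R ξa ξb r2 (nf R (p ++ ξa)) (nf R (p ++ ξb)) :=
      ⟨nf_idem R _, nf_idem R _, Or.inl ⟨p, rfl, rfl⟩⟩
    have hAz₀ : T Aa (nf R (p ++ ξb)) :=
      hT.trans hAx (hT.trans (hMir p) (hT.nfrel _))
    obtain ⟨zc, hc, hQc, hAzc⟩ :=
      mirrorChainSim hR hξa hξb hb2 hr2 hT hbT hMir hchain hQ₀ hAz₀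
    obtain ⟨zc₂, hc₂, hbr⟩ :=
      mirror_core hR hξa hξb hb2 hr2 hT hbT hMir hQc hAzc hstep
    rcases hbr with ⟨htau, -, -⟩ | ⟨z', hstepz, hTw'z', _⟩
    · exact absurd htau hna
    · exact ⟨zc₂, z', hc.tcat hc₂, hstepz, hT.trans hrelw' hTw'z'⟩

end MirrorResp
section Main
open Classical List BPA Relation

variable {C A : Type} {Γ : BPA C A} {R : Set C}

/-- the link relation: all R-bisimulations, together with the mirror pairs. -/
def Lnk (Γ : BPA C A) (R : Set C) (ξ₁ ξ₂ : List C) (x y : List C) : Prop :=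
  (∃ r, Γ.IsRBisim R r ∧ r x y) ∨
  (∃ p, (x = p ++ ξ₁ ∧ y = p ++ ξ₂) ∨ (x = p ++ ξ₂ ∧ y = p ++ ξ₁))

/-- the ambient relation -/
def TT (Γ : BPA C A) (R : Set C) (ξ₁ ξ₂ : List C) : List C → List C → Prop :=
  EqvGen (Lnk Γ R ξ₁ ξ₂)

variable {ξ₁ ξ₂ : List C}

lemma amb_TT (hR : R ⊆ Γ.GroundC) : Amb Γ R (TT Γ R ξ₁ ξ₂) where
  symm h := EqvGen.symm _ _ h
  trans h1 h2 := EqvGen.trans _ _ _ h1 h2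
  req h := EqvGen.rel _ _ (Or.inl ⟨_, isRBisim_nfEq hR, nf_eq_iff_REq.mp h⟩)

lemma bisim_TT {r : List C → List C → Prop} (hb : Γ.IsRBisim R r) {x y : List C}
    (hxy : r x y) : TT Γ R ξ₁ ξ₂ x y :=
  EqvGen.rel _ _ (Or.inl ⟨r, hb, hxy⟩)

lemma mirror_TT (p : List C) : TT Γ R ξ₁ ξ₂ (p ++ ξ₁) (p ++ ξ₂) :=
  EqvGen.rel _ _ (Or.inr ⟨p, Or.inl ⟨rfl, rfl⟩⟩)

lemma mirror_TT' (p : List C) : TT Γ R ξ₁ ξ₂ (p ++ ξ₂) (p ++ ξ₁) :=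
  EqvGen.rel _ _ (Or.inr ⟨p, Or.inr ⟨rfl, rfl⟩⟩)

lemma transfers_refl {T : List C → List C → Prop} (x : List C) :
    Transfers Γ R T x x :=
  ⟨id, fun _ _ _ h => h, fun _ _ _ _ _ h => h⟩

lemma transfers_comp {T : List C → List C → Prop} (hT : Amb Γ R T)
    {x y z : List C} (hxy : T x y)
    (h1 : Transfers Γ R T x y) (h2 : Transfers Γ R T y z) :
    Transfers Γ R T x z := by
  refine ⟨fun hg => h2.1 (h1.1 hg), ?_, ?_⟩
  · intro Aa α' hAx hp
    exact h2.2.1 Aa α' (hT.trans hAx hxy) (h1.2.1 Aa α' hAx hp)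
  · intro Aa a α' hna hAx hp
    exact h2.2.2 Aa a α' hna (hT.trans hAx hxy) (h1.2.2 Aa a α' hna hAx hp)

/-- transfer across a mirror link -/
lemma mirror_transfers (hR : R ⊆ Γ.GroundC)
    (hξ₁ : nf R ξ₁ = ξ₁) (hξ₂ : nf R ξ₂ = ξ₂)
    {r2 : List C → List C → Prop} (hb2 : Γ.IsRBisim R r2) (hr2 : r2 ξ₁ ξ₂)
    {T : List C → List C → Prop} (hT : Amb Γ R T)
    (hbT : ∀ r, Γ.IsRBisim R r → ∀ x y, r x y → T x y)
    (hMir : ∀ p, T (p ++ ξ₁) (p ++ ξ₂)) (p : List C) :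
    Transfers Γ R T (p ++ ξ₁) (p ++ ξ₂) :=
  mirror_transfers' hR hξ₁ hξ₂ hb2 hr2 hT hbT hMir p

/-- the transfer property holds for all `TT`-related pairs. -/
lemma PTT (hR : R ⊆ Γ.GroundC) (hξ₁ : nf R ξ₁ = ξ₁) (hξ₂ : nf R ξ₂ = ξ₂)
    {r2 : List C → List C → Prop} (hb2 : Γ.IsRBisim R r2) (hr2 : r2 ξ₁ ξ₂)
    {x y : List C} (h : TT Γ R ξ₁ ξ₂ x y) :
    Transfers Γ R (TT Γ R ξ₁ ξ₂) x y ∧ Transfers Γ R (TT Γ R ξ₁ ξ₂) y x := by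
  have hT : Amb Γ R (TT Γ R ξ₁ ξ₂) := amb_TT hR
  induction h with
  | rel x y hxy =>
    rcases hxy with ⟨r, hb, hr⟩ | ⟨p, hmp⟩
    · exact ⟨bisim_link_transfers hT hb (fun {a b} hab => bisim_TT hb hab) hr,
        bisim_link_transfers hT hb (fun {a b} hab => bisim_TT hb hab) (hb.1.symm hr)⟩
    · have h1 := mirror_transfers hR hξ₁ hξ₂ hb2 hr2 hT
        (fun r hb a b hab => bisim_TT hb hab) mirror_TT p
      have h2 := mirror_transfers hR hξ₂ hξ₁ hb2 (hb2.1.symm hr2) hT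
        (fun r hb a b hab => bisim_TT hb hab) mirror_TT' p
      rcases hmp with ⟨rfl, rfl⟩ | ⟨rfl, rfl⟩
      exacts [⟨h1, h2⟩, ⟨h2, h1⟩]
  | refl x => exact ⟨transfers_refl x, transfers_refl x⟩
  | symm x y _ ih => exact ⟨ih.2, ih.1⟩
  | trans x y z hxy hyz ih1 ih2 =>
    exact ⟨transfers_comp hT hxy ih1.1 ih2.1,
      transfers_comp hT (EqvGen.symm _ _ hyz) ih2.2 ih1.2⟩

end Main
section Final
open Classical List BPA Relation

variable {C A : Type} {Γ : BPA C A} {R : Set C} {ξ₁ ξ₂ : List C}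

lemma isRBisim_TT (hR : R ⊆ Γ.GroundC) (hξ₁ : nf R ξ₁ = ξ₁) (hξ₂ : nf R ξ₂ = ξ₂)
    {r2 : List C → List C → Prop} (hb2 : Γ.IsRBisim R r2) (hr2 : r2 ξ₁ ξ₂) :
    Γ.IsRBisim R (TT Γ R ξ₁ ξ₂) := by
  have hT : Amb Γ R (TT Γ R ξ₁ ξ₂) := amb_TT hR
  refine ⟨⟨fun x => EqvGen.refl x, fun h => EqvGen.symm _ _ h,
    fun h1 h2 => EqvGen.trans _ _ _ h1 h2⟩, fun α β h => hT.req h, ?_⟩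
  intro α β hTT
  have hPT := (PTT hR hξ₁ hξ₂ hb2 hr2 hTT).1
  refine ⟨hPT.1, ?_, ?_⟩
  · intro α' hstep hne
    have hpkg : PkgT Γ R (TT Γ R ξ₁ ξ₂) α α' α :=
      ⟨nf R α, ReflTransGen.refl,
        Or.inr ⟨nf R α', ⟨α, α', rfl, rfl, hstep⟩, hT.nfrel α'⟩⟩
    obtain ⟨w, hchain, hrest⟩ := hPT.2.1 α α' (EqvGen.refl α) hpkg
    have hαw : TT Γ R ξ₁ ξ₂ α w :=
      RelChain.last_rel hchain (hT.trans hTT (hT.nfrel β))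
    have hchainβ : RelChain (Γ.StepR R Γ.tau) (TT Γ R ξ₁ ξ₂) β (nf R β) w :=
      hchain.mono' (fun y hy => hT.trans (hT.symm hTT) hy)
    rcases hrest with hstay | ⟨w', hsR, hrel⟩
    · exact absurd (hT.trans hαw (hT.symm hstay)) hne
    · refine ⟨w, w', hchainβ, hsR, ?_, hrel⟩
      intro hcon
      exact hne (hT.trans hαw (hT.trans hcon (hT.symm hrel)))
  · intro a hna α' hstep
    have hpkg : PkgV Γ R (TT Γ R ξ₁ ξ₂) α a α' α :=
      ⟨nf R α, nf R α', ReflTransGen.refl, ⟨α, α', rfl, rfl, hstep⟩, hT.nfrel α'⟩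
    obtain ⟨w, w', hchain, hsR, hrel⟩ := hPT.2.2 α a α' hna (EqvGen.refl α) hpkg
    exact ⟨w, w', hchain.mono' (fun y hy => hT.trans (hT.symm hTT) hy), hsR, hrel⟩

lemma nf_append_nf_arg (R : Set C) (x s : List C) :
    nf R (x ++ s) = nf R (x ++ nf R s) := by
  obtain ⟨j, hj, hjR⟩ := exists_junk R s
  conv_lhs => rw [hj]
  rw [← List.append_assoc, nf_append_R hjR]

end Final

/-- If `γ ≃_R δ` then `Rd_R(γ) = Rd_R(δ)`. -/
theorem RdR_congr {C A : Type} (Γ : BPA C A) (hΓ : Γ.Normed)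
    (R : Set C) (hR : R ⊆ Γ.GroundC) (γ δ : List C) (h : Γ.RBisim R γ δ) :
    Γ.RdR R γ = Γ.RdR R δ := by
  classical
  open BPA Relation in
  obtain ⟨r2, hb2, hr2⟩ := h
  have hγ' : nf R (nf R γ) = nf R γ := nf_idem R γ
  have hδ' : nf R (nf R δ) = nf R δ := nf_idem R δ
  have hr2' : r2 (nf R γ) (nf R δ) := by
    refine hb2.1.trans ?_ (hb2.1.trans hr2 ?_)
    · exact hb2.1.symm (hb2.2.1 γ (nf R γ) (nf_eq_iff_REq.mpr (nf_idem R γ).symm))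
    · exact hb2.2.1 δ (nf R δ) (nf_eq_iff_REq.mpr (nf_idem R δ).symm)
  have hbis := isRBisim_TT hR hγ' hδ' hb2 hr2'
  have hT : Amb Γ R (TT Γ R (nf R γ) (nf R δ)) := amb_TT hR
  ext X
  simp only [RdR, Set.mem_setOf_eq]
  constructor
  · rintro ⟨r1, hb1, h1⟩
    refine ⟨TT Γ R (nf R γ) (nf R δ), hbis, ?_⟩
    have e1 : TT Γ R (nf R γ) (nf R δ) (X :: δ) ([X] ++ nf R δ) :=
      hT.req (nf_eq_iff_REq.mpr (by simpa using nf_append_nf_arg R [X] δ))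
    have e2 : TT Γ R (nf R γ) (nf R δ) ([X] ++ nf R δ) ([X] ++ nf R γ) :=
      mirror_TT' [X]
    have e3 : TT Γ R (nf R γ) (nf R δ) ([X] ++ nf R γ) (X :: γ) :=
      hT.symm (hT.req (nf_eq_iff_REq.mpr (by simpa using nf_append_nf_arg R [X] γ)))
    have e4 : TT Γ R (nf R γ) (nf R δ) (X :: γ) γ := bisim_TT hb1 h1
    have e5 : TT Γ R (nf R γ) (nf R δ) γ δ := bisim_TT hb2 hr2
    exact hT.trans e1 (hT.trans e2 (hT.trans e3 (hT.trans e4 e5)))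
  · rintro ⟨r1, hb1, h1⟩
    refine ⟨TT Γ R (nf R γ) (nf R δ), hbis, ?_⟩
    have e1 : TT Γ R (nf R γ) (nf R δ) (X :: γ) ([X] ++ nf R γ) :=
      hT.req (nf_eq_iff_REq.mpr (by simpa using nf_append_nf_arg R [X] γ))
    have e2 : TT Γ R (nf R γ) (nf R δ) ([X] ++ nf R γ) ([X] ++ nf R δ) :=
      mirror_TT [X]
    have e3 : TT Γ R (nf R γ) (nf R δ) ([X] ++ nf R δ) (X :: δ) :=
      hT.symm (hT.req (nf_eq_iff_REq.mpr (by simpa using nf_append_nf_arg R [X] δ)))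
    have e4 : TT Γ R (nf R γ) (nf R δ) (X :: δ) δ := bisim_TT hb1 h1
    have e5 : TT Γ R (nf R γ) (nf R δ) δ γ := hT.symm (bisim_TT hb2 hr2)
    exact hT.trans e1 (hT.trans e2 (hT.trans e3 (hT.trans e4 e5)))
end

section
/- Relativized prime process property: Let Γ = (C, A, Δ) be a normed BPA system and R ⊆ C_G. Suppose X and Y are ≃_R-primes and α, β are processes with αX ≃_R βY. Then X ≃_R Y. -/
open Relation

namespace BPA

variable {C A : Type}

/-- `X` is a `≃_R`-identity. -/
def RIdentityC (Γ : BPA C A) (R : Set C) (X : C) : Prop := Γ.RBisim R [X] []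

/-- `X` is a `≃_R`-composite: `X ≃_R αX'` for some constant `X' ∉ Id_R` and
some process `α ∉ (Rd_R(X'))*`. -/
def RCompositeC (Γ : BPA C A) (R : Set C) (X : C) : Prop :=
  ∃ (X' : C) (α : List C), X' ∉ Γ.IdR R ∧
    ¬ (∀ Y ∈ α, Y ∈ Γ.RdR R [X']) ∧ Γ.RBisim R [X] (α ++ [X'])

/-- `X` is a `≃_R`-prime: neither a `≃_R`-identity nor a `≃_R`-composite. -/
def RPrimeC (Γ : BPA C A) (R : Set C) (X : C) : Prop :=
  ¬ Γ.RIdentityC R X ∧ ¬ Γ.RCompositeC R X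

end BPA

/-! ### Auxiliary infrastructure for the proof -/

namespace BPAProof

open BPA List

variable {C A : Type}

/-! #### Normal form (`nf`) calculus -/

private lemma dropWhile_idem {p : C → Bool} (l : List C) :
    List.dropWhile p (List.dropWhile p l) = List.dropWhile p l := by
  induction l with
  | nil => simp
  | cons x t ih =>
    by_cases h : p x
    · simp [List.dropWhile_cons, h, ih]
    · simp [List.dropWhile_cons, h]

lemma nf_spec (R : Set C) (a : List C) :
    ∃ s, a = BPA.nf R a ++ s ∧ ∀ Z ∈ s, Z ∈ R := by
  classical
  refine ⟨(a.reverse.takeWhile fun X => decide (X ∈ R)).reverse, ?_, ?_⟩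
  · unfold BPA.nf
    rw [← List.reverse_append, List.takeWhile_append_dropWhile, List.reverse_reverse]
  · intro Z hZ
    rw [List.mem_reverse] at hZ
    have := List.mem_takeWhile_imp hZ
    simpa using this

lemma nf_append_R {R : Set C} {s : List C} (hs : ∀ Z ∈ s, Z ∈ R) (a : List C) :
    BPA.nf R (a ++ s) = BPA.nf R a := by
  classical
  unfold BPA.nf
  rw [List.reverse_append, List.dropWhile_append]
  have h0 : List.dropWhile (fun X => decide (X ∈ R)) s.reverse = [] := by
    rw [List.dropWhile_eq_nil_iff]
    intro x hx
    simp only [decide_eq_true_iff]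
    exact hs x (List.mem_reverse.mp hx)
  simp [h0]

lemma nf_append_nf_ne {R : Set C} {b : List C} (hb : BPA.nf R b ≠ []) (a : List C) :
    BPA.nf R (a ++ b) = a ++ BPA.nf R b := by
  classical
  unfold BPA.nf at hb ⊢
  rw [List.reverse_append, List.dropWhile_append]
  have h0 : (List.dropWhile (fun X => decide (X ∈ R)) b.reverse) ≠ [] := by
    intro h
    exact hb (by simp [h])
  simp [h0]

lemma nf_nil (R : Set C) : BPA.nf R ([] : List C) = [] := rfl

lemma nf_idem (R : Set C) (a : List C) : BPA.nf R (BPA.nf R a) = BPA.nf R a := by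
  classical
  unfold BPA.nf
  rw [List.reverse_reverse, dropWhile_idem]

lemma nf_single {R : Set C} {Y : C} (hY : Y ∉ R) : BPA.nf R [Y] = [Y] := by
  classical
  unfold BPA.nf
  simp [List.dropWhile_cons, hY]

lemma nf_append_single {R : Set C} {Y : C} (hY : Y ∉ R) (γ : List C) :
    BPA.nf R (γ ++ [Y]) = γ ++ [Y] := by
  rw [nf_append_nf_ne (by rw [nf_single hY]; simp) γ, nf_single hY]

lemma REq_iff_nf {R : Set C} {a b : List C} :
    BPA.REq R a b ↔ BPA.nf R a = BPA.nf R b := by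
  constructor
  · rintro ⟨ζ, sa, sb, rfl, rfl, hsa, hsb⟩
    rw [nf_append_R hsa, nf_append_R hsb]
  · intro h
    obtain ⟨sa, ha, hsa⟩ := nf_spec R a
    obtain ⟨sb, hb, hsb⟩ := nf_spec R b
    exact ⟨BPA.nf R a, sa, sb, ha, by rw [h]; exact hb, hsa, hsb⟩

lemma REq_refl (R : Set C) (a : List C) : BPA.REq R a a := REq_iff_nf.mpr rfl

lemma REq_symm {R : Set C} {a b : List C} (h : BPA.REq R a b) : BPA.REq R b a :=
  REq_iff_nf.mpr (REq_iff_nf.mp h).symm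

lemma REq_trans {R : Set C} {a b c : List C} (h1 : BPA.REq R a b) (h2 : BPA.REq R b c) :
    BPA.REq R a c :=
  REq_iff_nf.mpr ((REq_iff_nf.mp h1).trans (REq_iff_nf.mp h2))

lemma REq_nf (R : Set C) (a : List C) : BPA.REq R a (BPA.nf R a) :=
  REq_iff_nf.mpr (nf_idem R a).symm

/-! #### Step and `TauStar` lemmas -/

variable {Γ : BPA C A}

lemma Step_append {ℓ : A} {p q : List C} (h : Γ.Step ℓ p q) (w : List C) :
    Γ.Step ℓ (p ++ w) (q ++ w) := by
  obtain ⟨X, γ, β, hr, rfl, rfl⟩ := h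
  exact ⟨X, γ, β ++ w, hr, by simp, by simp⟩

lemma tauStar_append {p q : List C} (h : Γ.TauStar p q) (w : List C) :
    Γ.TauStar (p ++ w) (q ++ w) := by
  induction h with
  | refl => exact Relation.ReflTransGen.refl
  | tail _ hstep ih => exact ih.tail (Step_append hstep w)

lemma anyStar_append {p q : List C}
    (h : Relation.ReflTransGen Γ.AnyStep p q) (w : List C) :
    Relation.ReflTransGen Γ.AnyStep (p ++ w) (q ++ w) := by
  induction h with
  | refl => exact Relation.ReflTransGen.refl
  | tail _ hstep ih =>
    obtain ⟨ℓ, hstep⟩ := hstep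
    exact ih.tail ⟨ℓ, Step_append hstep w⟩

lemma tauStar_nil_decomp :
    ∀ {c : List C}, Γ.TauStar c [] → ∀ u w, c = u ++ w → Γ.TauStar u [] ∧ Γ.TauStar w [] := by
  intro c hc
  induction hc using Relation.ReflTransGen.head_induction_on with
  | refl =>
    intro u w huw
    obtain ⟨hu, hw⟩ := List.append_eq_nil_iff.mp huw.symm
    subst hu; subst hw
    exact ⟨Relation.ReflTransGen.refl, Relation.ReflTransGen.refl⟩
  | head hstep _ ih =>
    intro u w huw
    subst huw
    obtain ⟨X, γ, β, hr, heq, rfl⟩ := hstep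
    match u, heq with
    | [], heq =>
      simp only [List.nil_append] at heq ⊢
      refine ⟨Relation.ReflTransGen.refl, ?_⟩
      exact Relation.ReflTransGen.head ⟨X, γ, β, hr, heq, rfl⟩ (by
        have := ih (γ ++ β) [] (by simp)
        exact this.1)
    | Z :: u₁, heq =>
      have hZ : Z = X := by simpa using congrArg (fun l => l.head?) heq
      have hβ : β = u₁ ++ w := by have := congrArg (fun l => l.tail) heq; simpa using this.symm
      subst hZ hβ
      have := ih (γ ++ u₁) w (by simp)
      refine ⟨Relation.ReflTransGen.head ⟨Z, γ, u₁, hr, rfl, rfl⟩ this.1, this.2⟩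

lemma tauStar_nil_append {u w : List C} (hu : Γ.TauStar u []) (hw : Γ.TauStar w []) :
    Γ.TauStar (u ++ w) [] := by
  have h1 : Γ.TauStar (u ++ w) w := by simpa using tauStar_append hu w
  exact h1.trans hw

lemma ground_of_R {R : Set C} (hR : R ⊆ Γ.GroundC) :
    ∀ (s : List C), (∀ Z ∈ s, Z ∈ R) → Γ.TauStar s [] := by
  intro s
  induction s with
  | nil => intro _; exact Relation.ReflTransGen.refl
  | cons Z t ih =>
    intro hs
    have h1 : Γ.TauStar [Z] [] := hR (hs Z (by simp))
    have h2 : Γ.TauStar t [] := ih (fun W hW => hs W (by simp [hW]))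
    simpa using tauStar_nil_append h1 h2

lemma REq_ground {R : Set C} (hR : R ⊆ Γ.GroundC) {a b : List C}
    (h : BPA.REq R a b) (ha : Γ.TauStar a []) : Γ.TauStar b [] := by
  obtain ⟨ζ, sa, sb, rfl, rfl, hsa, hsb⟩ := h
  have := tauStar_nil_decomp ha ζ sa rfl
  exact tauStar_nil_append this.1 (ground_of_R hR sb hsb)

/-! #### `StepR` lemmas -/

lemma stepR_of_step {R : Set C} {ℓ : A} {p q : List C} (h : Γ.Step ℓ p q) :
    Γ.StepR R ℓ (BPA.nf R p) (BPA.nf R q) := ⟨p, q, rfl, rfl, h⟩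

lemma StepR.nf_left {R : Set C} {ℓ : A} {ζ η : List C} (h : Γ.StepR R ℓ ζ η) :
    BPA.nf R ζ = ζ := by
  obtain ⟨p, q, rfl, rfl, _⟩ := h
  exact nf_idem R p

lemma StepR.nf_right {R : Set C} {ℓ : A} {ζ η : List C} (h : Γ.StepR R ℓ ζ η) :
    BPA.nf R η = η := by
  obtain ⟨p, q, rfl, rfl, _⟩ := h
  exact nf_idem R q

end BPAProof

namespace BPAProof

open BPA List

variable {C A : Type} {Γ : BPA C A} {R : Set C}

/-! #### Accessors for `IsRBisim` -/

lemma isr_equiv {r} (hr : Γ.IsRBisim R r) : Equivalence r := hr.1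

lemma isr_req {r} (hr : Γ.IsRBisim R r) {a b : List C} (h : BPA.REq R a b) : r a b :=
  hr.2.1 a b h

lemma isr_nf_left {r} (hr : Γ.IsRBisim R r) {a b : List C} (h : r a b) :
    r (BPA.nf R a) b :=
  hr.1.trans (isr_req hr (REq_symm (REq_nf R a))) h

lemma isr_nf_right {r} (hr : Γ.IsRBisim R r) {a b : List C} (h : r a b) :
    r a (BPA.nf R b) :=
  hr.1.trans h (isr_req hr (REq_nf R b))

lemma isr_ground {r} (hr : Γ.IsRBisim R r) {a b : List C} (h : r a b)
    (ha : Γ.TauStar a []) : Γ.TauStar b [] :=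
  (hr.2.2 a b h).1 ha

lemma isr_tau {r} (hr : Γ.IsRBisim R r) {a b a' : List C} (h : r a b)
    (hs : Γ.Step Γ.tau a a') (hne : ¬ r a a') :
    ∃ β'' β', BPA.RelChain (Γ.StepR R Γ.tau) r b (BPA.nf R b) β'' ∧
      Γ.StepR R Γ.tau β'' β' ∧ ¬ r β'' β' ∧ r a' β' :=
  (hr.2.2 a b h).2.1 a' hs hne

lemma isr_vis {r} (hr : Γ.IsRBisim R r) {a b a' : List C} {ℓ : A}
    (hℓ : ℓ ≠ Γ.tau) (h : r a b) (hs : Γ.Step ℓ a a') :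
    ∃ β'' β', BPA.RelChain (Γ.StepR R Γ.tau) r b (BPA.nf R b) β'' ∧
      Γ.StepR R ℓ β'' β' ∧ r a' β' :=
  (hr.2.2 a b h).2.2 ℓ hℓ a' hs

/-! #### `REq` is an `R`-bisimulation -/

/-- one-step matching lemma for `REq`-related processes -/
lemma REq_step_match {a b a' : List C} {ℓ : A} (hreq : BPA.REq R a b)
    (hs : Γ.Step ℓ a a') :
    ∃ β', Γ.StepR R ℓ (BPA.nf R b) β' ∧ BPA.REq R a' β' ∧
      (BPA.REq R (BPA.nf R b) β' → BPA.REq R a a') := by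
  classical
  obtain ⟨sa, ha_eq, hsa⟩ := nf_spec R a
  obtain ⟨sb, hb_eq, hsb⟩ := nf_spec R b
  have hnfeq : BPA.nf R a = BPA.nf R b := REq_iff_nf.mp hreq
  obtain ⟨Z, g, a₁, hrule, haZ, ha'⟩ := hs
  rcases hc : BPA.nf R a with _ | ⟨Z₀, c₁⟩
  · -- the normal form of `a` is empty
    refine ⟨BPA.nf R a', ?_, REq_nf R a', ?_⟩
    · have h1 := stepR_of_step (R := R) (⟨Z, g, a₁, hrule, haZ, ha'⟩ : Γ.Step ℓ a a')
      rw [hc] at h1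
      rw [← hnfeq, hc]
      exact h1
    · intro hre
      rw [← hnfeq, hc] at hre
      have h2 : BPA.nf R a' = [] := by
        have := (REq_iff_nf.mp hre).symm
        rwa [nf_idem, nf_nil] at this
      exact REq_iff_nf.mpr (by rw [hc, h2])
  · -- the normal form of `a` is nonempty; mirror the step on `b`
    have hdec : Z :: a₁ = Z₀ :: (c₁ ++ sa) := by
      rw [← haZ, ha_eq, hc]; simp
    obtain ⟨hZ, ha₁⟩ := List.cons_eq_cons.mp hdec
    subst hZ
    have hbstep : Γ.Step ℓ b (g ++ (c₁ ++ sb)) := by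
      refine ⟨Z, g, c₁ ++ sb, hrule, ?_, rfl⟩
      rw [hb_eq, ← hnfeq, hc]; simp
    refine ⟨BPA.nf R (g ++ (c₁ ++ sb)), stepR_of_step hbstep, ?_, ?_⟩
    · -- REq a' (nf (g ++ c₁ ++ sb))
      apply REq_iff_nf.mpr
      rw [ha', ha₁, nf_idem, ← List.append_assoc, ← List.append_assoc,
        nf_append_R hsa, nf_append_R hsb]
    · intro hre
      apply REq_iff_nf.mpr
      have h3 := REq_iff_nf.mp hre
      rw [nf_idem, nf_idem, ← List.append_assoc, nf_append_R hsb] at h3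
      rw [ha', ha₁, ← List.append_assoc, nf_append_R hsa, ← h3, ← hnfeq]

theorem isRBisim_REq (hR : R ⊆ Γ.GroundC) : Γ.IsRBisim R (BPA.REq R) := by
  refine ⟨⟨REq_refl R, REq_symm, REq_trans⟩, fun a b h => h, ?_⟩
  intro a b hab
  refine ⟨fun h => REq_ground hR hab h, ?_, ?_⟩
  · intro a' hs hne
    obtain ⟨β', h1, h2, h3⟩ := REq_step_match hab hs
    exact ⟨BPA.nf R b, β', Relation.ReflTransGen.refl, h1, fun hcon => hne (h3 hcon), h2⟩
  · intro ℓ hℓ a' hs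
    obtain ⟨β', h1, h2, _⟩ := REq_step_match hab hs
    exact ⟨BPA.nf R b, β', Relation.ReflTransGen.refl, h1, h2⟩

/-! #### Basic facts about `RBisim` -/

lemma rbisim_of_REq (hR : R ⊆ Γ.GroundC) {a b : List C} (h : BPA.REq R a b) :
    Γ.RBisim R a b := ⟨BPA.REq R, isRBisim_REq hR, h⟩

lemma rbisim_refl (hR : R ⊆ Γ.GroundC) (a : List C) : Γ.RBisim R a a :=
  rbisim_of_REq hR (REq_refl R a)

lemma RBisim_symm {a b : List C} (h : Γ.RBisim R a b) : Γ.RBisim R b a := by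
  obtain ⟨r, hr, hab⟩ := h
  exact ⟨r, hr, hr.1.symm hab⟩

end BPAProof

namespace BPAProof

open BPA List

variable {C A : Type} {Γ : BPA C A} {R : Set C}

/-! #### The closure relation `Gcl` -/

/-- Generating links: prefixed copies of the pair `(x, y)`, plus arbitrary
`R`-bisimilar pairs. -/
def glink (Γ : BPA C A) (R : Set C) (x y a b : List C) : Prop :=
  (∃ σ, a = σ ++ x ∧ b = σ ++ y) ∨ (∃ σ, a = σ ++ y ∧ b = σ ++ x) ∨ Γ.RBisim R a b

/-- The closure: chains of links. -/
def Gcl (Γ : BPA C A) (R : Set C) (x y : List C) : List C → List C → Prop :=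
  Relation.ReflTransGen (glink Γ R x y)

/-- The linkage invariant used while relaying transitions across a link. -/
def LL (Γ : BPA C A) (R : Set C) (x y ζ ξ : List C) : Prop :=
  (∃ σ, ζ = σ ++ x ∧ ξ = σ ++ y) ∨ (∃ σ, ζ = σ ++ y ∧ ξ = σ ++ x) ∨
    (∃ r, Γ.IsRBisim R r ∧ r ζ ξ)

lemma glink_symm {x y a b : List C} (h : glink Γ R x y a b) : glink Γ R x y b a := by
  rcases h with ⟨σ, h1, h2⟩ | ⟨σ, h1, h2⟩ | h
  · exact Or.inr (Or.inl ⟨σ, h2, h1⟩)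
  · exact Or.inl ⟨σ, h2, h1⟩
  · exact Or.inr (Or.inr (RBisim_symm h))

lemma glink_swap {x y a b : List C} (h : glink Γ R y x a b) : glink Γ R x y a b := by
  rcases h with ⟨σ, h1, h2⟩ | ⟨σ, h1, h2⟩ | h
  · exact Or.inr (Or.inl ⟨σ, h1, h2⟩)
  · exact Or.inl ⟨σ, h1, h2⟩
  · exact Or.inr (Or.inr h)

lemma Gcl_refl (x y a : List C) : Gcl Γ R x y a a := Relation.ReflTransGen.refl

lemma Gcl_symm {x y a b : List C} (h : Gcl Γ R x y a b) : Gcl Γ R x y b a :=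
  by
    haveI : Std.Symm (glink Γ R x y) := ⟨fun _ _ => glink_symm⟩
    exact Std.Symm.symm (r := Relation.ReflTransGen (glink Γ R x y)) _ _ h

lemma Gcl_trans {x y a b c : List C} (h1 : Gcl Γ R x y a b) (h2 : Gcl Γ R x y b c) :
    Gcl Γ R x y a c := h1.trans h2

lemma Gcl_swap {x y a b : List C} (h : Gcl Γ R y x a b) : Gcl Γ R x y a b :=
  Relation.ReflTransGen.mono (fun _ _ => glink_swap) _ _ h

lemma rbisim_to_Gcl {x y a b : List C} (h : Γ.RBisim R a b) : Gcl Γ R x y a b :=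
  Relation.ReflTransGen.single (Or.inr (Or.inr h))

lemma REq_to_Gcl (hR : R ⊆ Γ.GroundC) {x y a b : List C} (h : BPA.REq R a b) :
    Gcl Γ R x y a b := rbisim_to_Gcl (rbisim_of_REq hR h)

lemma LL_to_Gcl {x y ζ ξ : List C} (h : LL Γ R x y ζ ξ) : Gcl Γ R x y ζ ξ := by
  rcases h with ⟨σ, h1, h2⟩ | ⟨σ, h1, h2⟩ | ⟨r, hr, hrel⟩
  · exact Relation.ReflTransGen.single (Or.inl ⟨σ, h1, h2⟩)
  · exact Relation.ReflTransGen.single (Or.inr (Or.inl ⟨σ, h1, h2⟩))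
  · exact rbisim_to_Gcl ⟨r, hr, hrel⟩

lemma LL_swap {x y ζ ξ : List C} (h : LL Γ R y x ζ ξ) : LL Γ R x y ζ ξ := by
  rcases h with ⟨σ, h1, h2⟩ | ⟨σ, h1, h2⟩ | h
  · exact Or.inr (Or.inl ⟨σ, h1, h2⟩)
  · exact Or.inl ⟨σ, h1, h2⟩
  · exact Or.inr (Or.inr h)

/-- Bundled hypotheses on the generating pair. -/
structure GoodPair (Γ : BPA C A) (R : Set C) (x y : List C) : Prop where
  hR : R ⊆ Γ.GroundC
  hx : BPA.nf R x = x
  hy : BPA.nf R y = y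
  hx0 : x ≠ []
  hy0 : y ≠ []
  hxy : Γ.RBisim R x y

lemma GoodPair.symm {x y : List C} (G : GoodPair Γ R x y) : GoodPair Γ R y x :=
  ⟨G.hR, G.hy, G.hx, G.hy0, G.hx0, RBisim_symm G.hxy⟩

/-! #### Generic chain facts -/

lemma rtg_last {α : Type*} {s : α → α → Prop} {Q : α → Prop} {c d : α}
    (h : Relation.ReflTransGen (fun a b => s a b ∧ Q b) c d) : c = d ∨ Q d := by
  rcases Relation.ReflTransGen.cases_tail h with h | ⟨e, _, hlast⟩
  · exact Or.inl h.symm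
  · exact Or.inr hlast.2

lemma chain_nf {Q : List C → Prop} {c d : List C}
    (h : Relation.ReflTransGen (fun a b => Γ.StepR R Γ.tau a b ∧ Q b) c d)
    (hc : BPA.nf R c = c) : BPA.nf R d = d := by
  rcases Relation.ReflTransGen.cases_tail h with h | ⟨e, _, hlast⟩
  · rw [h]; exact hc
  · exact StepR.nf_right hlast.1

/-! #### The one-step relay lemma -/

/-- Relaying one `StepR` move across a "bisimulation" linkage. -/
lemma relay_one_bisim {r} (hr : Γ.IsRBisim R r) {ζ ξ ζ' : List C} {ℓ : A}
    (hrel : r ζ ξ) (hξ : BPA.nf R ξ = ξ) (hst : Γ.StepR R ℓ ζ ζ') :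
    ∃ ξ'', Relation.ReflTransGen (fun a b => Γ.StepR R Γ.tau a b ∧ r ξ b) ξ ξ'' ∧
      BPA.nf R ξ'' = ξ'' ∧
      ((ℓ = Γ.tau ∧ r ζ' ξ'') ∨
        ∃ ξ', Γ.StepR R ℓ ξ'' ξ' ∧ BPA.nf R ξ' = ξ' ∧ r ζ' ξ') := by
  obtain ⟨p, q, hp, hq, hpq⟩ := hst
  have hpζ : r p ζ := isr_req hr (REq_iff_nf.mpr (by rw [hp, nf_idem]))
  have hq' : r ζ' q := isr_req hr (REq_iff_nf.mpr (by rw [hq, nf_idem]))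
  have hpξ : r p ξ := hr.1.trans hpζ hrel
  by_cases hτ : ℓ = Γ.tau
  · subst hτ
    by_cases hin : r p q
    · exact ⟨ξ, Relation.ReflTransGen.refl, hξ, Or.inl ⟨rfl,
        hr.1.trans (hr.1.trans hq' (hr.1.symm hin)) hpξ⟩⟩
    · obtain ⟨β'', β', hchain, hstep, _, hrel'⟩ := isr_tau hr hpξ hpq hin
      rw [BPA.RelChain, hξ] at hchain
      exact ⟨β'', hchain, chain_nf hchain hξ,
        Or.inr ⟨β', hstep, StepR.nf_right hstep, hr.1.trans hq' hrel'⟩⟩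
  · obtain ⟨β'', β', hchain, hstep, hrel'⟩ := isr_vis hr hτ hpξ hpq
    rw [BPA.RelChain, hξ] at hchain
    exact ⟨β'', hchain, chain_nf hchain hξ,
      Or.inr ⟨β', hstep, StepR.nf_right hstep, hr.1.trans hq' hrel'⟩⟩

/-- Relaying one `StepR` move across an aligned-or-bisimulation linkage. -/
lemma relay_one_core {x y : List C} (G : GoodPair Γ R x y) {ζ ξ ζ' : List C} {ℓ : A}
    (hL : (∃ σ, ζ = σ ++ x ∧ ξ = σ ++ y) ∨ (∃ r, Γ.IsRBisim R r ∧ r ζ ξ))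
    (hξ : BPA.nf R ξ = ξ) (hst : Γ.StepR R ℓ ζ ζ') :
    ∃ ξ'', Relation.ReflTransGen (fun a b => Γ.StepR R Γ.tau a b ∧ Gcl Γ R x y ξ b) ξ ξ'' ∧
      BPA.nf R ξ'' = ξ'' ∧
      ((ℓ = Γ.tau ∧ LL Γ R x y ζ' ξ'') ∨
        ∃ ξ', Γ.StepR R ℓ ξ'' ξ' ∧ BPA.nf R ξ' = ξ' ∧ LL Γ R x y ζ' ξ') := by
  have bisimCase : ∀ (r : List C → List C → Prop), Γ.IsRBisim R r → r ζ ξ →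
      ∃ ξ'', Relation.ReflTransGen (fun a b => Γ.StepR R Γ.tau a b ∧ Gcl Γ R x y ξ b) ξ ξ'' ∧
        BPA.nf R ξ'' = ξ'' ∧
        ((ℓ = Γ.tau ∧ LL Γ R x y ζ' ξ'') ∨
          ∃ ξ', Γ.StepR R ℓ ξ'' ξ' ∧ BPA.nf R ξ' = ξ' ∧ LL Γ R x y ζ' ξ') := by
    intro r hr hrel
    obtain ⟨ξ'', hchain, hnf'', hout⟩ := relay_one_bisim hr hrel hξ hst
    refine ⟨ξ'', Relation.ReflTransGen.mono ?_ _ _ hchain, hnf'', ?_⟩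
    · exact fun a b hab => ⟨hab.1, rbisim_to_Gcl ⟨r, hr, hab.2⟩⟩
    · rcases hout with ⟨h1, h2⟩ | ⟨ξ', h1, h2, h3⟩
      · exact Or.inl ⟨h1, Or.inr (Or.inr ⟨r, hr, h2⟩)⟩
      · exact Or.inr ⟨ξ', h1, h2, Or.inr (Or.inr ⟨r, hr, h3⟩)⟩
  rcases hL with ⟨σ, hζσ, hξσ⟩ | ⟨r, hr, hrel⟩
  · rcases σ with _ | ⟨Z₀, σ₁⟩
    · -- empty shared prefix: fall back to the witness bisimulation of `x ≃ y`
      obtain ⟨r, hr, hxyr⟩ := G.hxy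
      simp only [List.nil_append] at hζσ hξσ
      subst hζσ; subst hξσ
      exact bisimCase r hr hxyr
    · -- nonempty shared prefix: mirror the step
      subst hζσ; subst hξσ
      obtain ⟨p, q, hp, hq, hpq⟩ := hst
      obtain ⟨s, hps, hss⟩ := nf_spec R p
      rw [← hp] at hps
      obtain ⟨W, g, β, hrule, hpW, hq'⟩ := hpq
      have hWβ : W :: β = Z₀ :: (σ₁ ++ x ++ s) := by rw [← hpW, hps]; simp
      obtain ⟨hW, hβ⟩ := List.cons_eq_cons.mp hWβ
      subst hW
      have hxne : BPA.nf R x ≠ [] := by rw [G.hx]; exact G.hx0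
      have hyne : BPA.nf R y ≠ [] := by rw [G.hy]; exact G.hy0
      have hζ'eq : ζ' = (g ++ σ₁) ++ x := by
        have e1 : g ++ β = ((g ++ σ₁) ++ x) ++ s := by rw [hβ]; simp
        rw [hq, hq', e1, nf_append_R hss, nf_append_nf_ne hxne (g ++ σ₁), G.hx]
      have hmir : Γ.Step ℓ ((W :: σ₁) ++ y) (g ++ (σ₁ ++ y)) :=
        ⟨W, g, σ₁ ++ y, hrule, by simp, rfl⟩
      have hstR := stepR_of_step (R := R) hmir
      have e2 : BPA.nf R ((W :: σ₁) ++ y) = (W :: σ₁) ++ y := by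
        rw [nf_append_nf_ne hyne (W :: σ₁), G.hy]
      have e3 : BPA.nf R (g ++ (σ₁ ++ y)) = (g ++ σ₁) ++ y := by
        rw [← List.append_assoc, nf_append_nf_ne hyne (g ++ σ₁), G.hy]
      rw [e2, e3] at hstR
      refine ⟨(W :: σ₁) ++ y, Relation.ReflTransGen.refl, hξ,
        Or.inr ⟨(g ++ σ₁) ++ y, hstR, ?_, Or.inl ⟨g ++ σ₁, hζ'eq, rfl⟩⟩⟩
      rw [nf_append_nf_ne hyne (g ++ σ₁), G.hy]
  · exact bisimCase r hr hrel

/-- Relaying one `StepR` move across any linkage. -/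
lemma relay_one {x y : List C} (G : GoodPair Γ R x y) {ζ ξ ζ' : List C} {ℓ : A}
    (hL : LL Γ R x y ζ ξ) (hξ : BPA.nf R ξ = ξ) (hst : Γ.StepR R ℓ ζ ζ') :
    ∃ ξ'', Relation.ReflTransGen (fun a b => Γ.StepR R Γ.tau a b ∧ Gcl Γ R x y ξ b) ξ ξ'' ∧
      BPA.nf R ξ'' = ξ'' ∧
      ((ℓ = Γ.tau ∧ LL Γ R x y ζ' ξ'') ∨
        ∃ ξ', Γ.StepR R ℓ ξ'' ξ' ∧ BPA.nf R ξ' = ξ' ∧ LL Γ R x y ζ' ξ') := by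
  rcases hL with h | h | h
  · exact relay_one_core G (Or.inl h) hξ hst
  · obtain ⟨ξ'', hchain, hnf'', hout⟩ := relay_one_core G.symm (Or.inl h) hξ hst
    refine ⟨ξ'', Relation.ReflTransGen.mono
      (fun a b hab => ⟨hab.1, Gcl_swap hab.2⟩) _ _ hchain, hnf'', ?_⟩
    rcases hout with ⟨h1, h2⟩ | ⟨ξ', h1, h2, h3⟩
    · exact Or.inl ⟨h1, LL_swap h2⟩
    · exact Or.inr ⟨ξ', h1, h2, LL_swap h3⟩
  · exact relay_one_core G (Or.inr h) hξ hst

end BPAProof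

namespace BPAProof

open BPA List

variable {C A : Type} {Γ : BPA C A} {R : Set C}

/-- Relay a whole anchored `τ`-chain across a linkage. -/
lemma relay_chain {x y : List C} (G : GoodPair Γ R x y) (u : List C) :
    ∀ {c d}, Relation.ReflTransGen (fun a b => Γ.StepR R Γ.tau a b ∧ Gcl Γ R x y u b) c d →
    ∀ {ξ}, LL Γ R x y c ξ → BPA.nf R ξ = ξ → Gcl Γ R x y u ξ →
    ∃ ξ'', Relation.ReflTransGen (fun a b => Γ.StepR R Γ.tau a b ∧ Gcl Γ R x y u b) ξ ξ'' ∧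
      LL Γ R x y d ξ'' ∧ BPA.nf R ξ'' = ξ'' ∧ Gcl Γ R x y u ξ'' := by
  intro c d hcd
  induction hcd using Relation.ReflTransGen.head_induction_on with
  | refl => intro ξ hL hξ hGu; exact ⟨ξ, Relation.ReflTransGen.refl, hL, hξ, hGu⟩
  | head hstep _ ih =>
    intro ξ hL hξ hGu
    obtain ⟨ξ₂, hchain, hnf₂, hout⟩ := relay_one G hL hξ hstep.1
    have hchain' : Relation.ReflTransGen
        (fun a b => Γ.StepR R Γ.tau a b ∧ Gcl Γ R x y u b) ξ ξ₂ :=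
      Relation.ReflTransGen.mono (fun a b hab => ⟨hab.1, Gcl_trans hGu hab.2⟩) _ _ hchain
    have hGuξ₂ : Gcl Γ R x y u ξ₂ := by
      rcases rtg_last hchain' with h | h
      · rw [← h]; exact hGu
      · exact h
    rcases hout with ⟨_, hL₂⟩ | ⟨ξ₃, hstep₃, hnf₃, hL₃⟩
    · obtain ⟨ξ'', h1, h2, h3, h4⟩ := ih hL₂ hnf₂ hGuξ₂
      exact ⟨ξ'', hchain'.trans h1, h2, h3, h4⟩
    · have hGuξ₃ : Gcl Γ R x y u ξ₃ := Gcl_trans hstep.2 (LL_to_Gcl hL₃)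
      obtain ⟨ξ'', h1, h2, h3, h4⟩ := ih hL₃ hnf₃ hGuξ₃
      exact ⟨ξ'', (hchain'.tail ⟨hstep₃, hGuξ₃⟩).trans h1, h2, h3, h4⟩

/-- Relay the final (possibly visible) step of an answer across a linkage. -/
lemma relay_final {x y : List C} (G : GoodPair Γ R x y) (u u' : List C) {ℓ : A}
    {e e' ξ : List C} (hL : LL Γ R x y e ξ) (hξ : BPA.nf R ξ = ξ)
    (hGu : Gcl Γ R x y u ξ) (hst : Γ.StepR R ℓ e e') (hrel : Gcl Γ R x y u' e') :
    ∃ ξ'', Relation.ReflTransGen (fun a b => Γ.StepR R Γ.tau a b ∧ Gcl Γ R x y u b) ξ ξ'' ∧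
      BPA.nf R ξ'' = ξ'' ∧ Gcl Γ R x y u ξ'' ∧
      ((ℓ = Γ.tau ∧ Gcl Γ R x y u' ξ'') ∨
        ∃ ξ', Γ.StepR R ℓ ξ'' ξ' ∧ Gcl Γ R x y u' ξ') := by
  obtain ⟨ξ₂, hchain, hnf₂, hout⟩ := relay_one G hL hξ hst
  have hchain' : Relation.ReflTransGen
      (fun a b => Γ.StepR R Γ.tau a b ∧ Gcl Γ R x y u b) ξ ξ₂ :=
    Relation.ReflTransGen.mono (fun a b hab => ⟨hab.1, Gcl_trans hGu hab.2⟩) _ _ hchain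
  have hGuξ₂ : Gcl Γ R x y u ξ₂ := by
    rcases rtg_last hchain' with h | h
    · rw [← h]; exact hGu
    · exact h
  rcases hout with ⟨h1, hL₂⟩ | ⟨ξ₃, h1, h2, hL₃⟩
  · exact ⟨ξ₂, hchain', hnf₂, hGuξ₂,
      Or.inl ⟨h1, Gcl_trans hrel (LL_to_Gcl hL₂)⟩⟩
  · exact ⟨ξ₂, hchain', hnf₂, hGuξ₂,
      Or.inr ⟨ξ₃, h1, Gcl_trans hrel (LL_to_Gcl hL₃)⟩⟩

/-- The answer structure that is propagated along a chain of links. -/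
def AnsT (Γ : BPA C A) (R : Set C) (x y u u' : List C) (ℓ : A) (w : List C) : Prop :=
  ∃ ξ'', Relation.ReflTransGen (fun a b => Γ.StepR R Γ.tau a b ∧ Gcl Γ R x y u b)
      (BPA.nf R w) ξ'' ∧ BPA.nf R ξ'' = ξ'' ∧ Gcl Γ R x y u ξ'' ∧
    ((ℓ = Γ.tau ∧ Gcl Γ R x y u' ξ'') ∨
      ∃ ξ', Γ.StepR R ℓ ξ'' ξ' ∧ Gcl Γ R x y u' ξ')

lemma ansT_propagate {x y : List C} (G : GoodPair Γ R x y) {u u' v : List C} {ℓ : A}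
    (hch : Gcl Γ R x y u v) (base : AnsT Γ R x y u u' ℓ u) : AnsT Γ R x y u u' ℓ v := by
  have hxne : BPA.nf R x ≠ [] := by rw [G.hx]; exact G.hx0
  have hyne : BPA.nf R y ≠ [] := by rw [G.hy]; exact G.hy0
  induction hch with
  | refl => exact base
  | @tail w vv hpre hlink ih =>
    obtain ⟨ξ'', hchain, hnf'', hGu'', hfin⟩ := ih
    -- initialize linkage between `nf w` and `nf vv`
    have hinit : LL Γ R x y (BPA.nf R w) (BPA.nf R vv) := by
      rcases hlink with ⟨σ, rfl, rfl⟩ | ⟨σ, rfl, rfl⟩ | ⟨r, hr, hrel⟩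
      · exact Or.inl ⟨σ, by rw [nf_append_nf_ne hxne σ, G.hx],
          by rw [nf_append_nf_ne hyne σ, G.hy]⟩
      · exact Or.inr (Or.inl ⟨σ, by rw [nf_append_nf_ne hyne σ, G.hy],
          by rw [nf_append_nf_ne hxne σ, G.hx]⟩)
      · exact Or.inr (Or.inr ⟨r, hr, isr_nf_left hr (isr_nf_right hr hrel)⟩)
    have hGunfv : Gcl Γ R x y u (BPA.nf R vv) :=
      Gcl_trans (Gcl_trans hpre (Relation.ReflTransGen.single hlink))
        (REq_to_Gcl G.hR (REq_nf R vv))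
    obtain ⟨xihat, hchain₂, hL₂, hnf₂, hGu₂⟩ :=
      relay_chain G u hchain hinit (nf_idem R vv) hGunfv
    rcases hfin with ⟨hℓτ, hGu'ξ''⟩ | ⟨ξ', hstep', hGu'ξ'⟩
    · exact ⟨xihat, hchain₂, hnf₂, hGu₂,
        Or.inl ⟨hℓτ, Gcl_trans hGu'ξ'' (LL_to_Gcl hL₂)⟩⟩
    · obtain ⟨ξ₄, hchain₃, hnf₄, hGu₄, hout⟩ :=
        relay_final G u u' hL₂ hnf₂ hGu₂ hstep' hGu'ξ'
      exact ⟨ξ₄, hchain₂.trans hchain₃, hnf₄, hGu₄, hout⟩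

/-- Groundness is preserved along the closure. -/
lemma Gcl_ground {x y : List C} (G : GoodPair Γ R x y) {a b : List C}
    (h : Gcl Γ R x y a b) (ha : Γ.TauStar a []) : Γ.TauStar b [] := by
  obtain ⟨r0, hr0, hxy0⟩ := G.hxy
  induction h with
  | refl => exact ha
  | tail _ hlink ih =>
    rcases hlink with ⟨σ, rfl, rfl⟩ | ⟨σ, rfl, rfl⟩ | ⟨r, hr, hrel⟩
    · obtain ⟨h1, h2⟩ := tauStar_nil_decomp ih σ x rfl
      exact tauStar_nil_append h1 (isr_ground hr0 hxy0 h2)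
    · obtain ⟨h1, h2⟩ := tauStar_nil_decomp ih σ y rfl
      exact tauStar_nil_append h1 (isr_ground hr0 (hr0.1.symm hxy0) h2)
    · exact isr_ground hr hrel ih

/-- **Main closure theorem**: the closure of the links is an `R`-bisimulation. -/
theorem isRBisim_Gcl {x y : List C} (G : GoodPair Γ R x y) :
    Γ.IsRBisim R (Gcl Γ R x y) := by
  have hR := G.hR
  refine ⟨⟨fun a => Gcl_refl x y a, fun h => Gcl_symm h, fun h1 h2 => Gcl_trans h1 h2⟩,
    fun a b h => REq_to_Gcl hR h, ?_⟩
  intro u v huv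
  refine ⟨fun hu => Gcl_ground G huv hu, ?_, ?_⟩
  · -- silent transfer condition
    intro u' hstep hne
    have base : AnsT Γ R x y u u' Γ.tau u :=
      ⟨BPA.nf R u, Relation.ReflTransGen.refl, nf_idem R u, REq_to_Gcl hR (REq_nf R u),
        Or.inr ⟨BPA.nf R u', stepR_of_step hstep, REq_to_Gcl hR (REq_nf R u')⟩⟩
    obtain ⟨ξ'', hchain, _, hGu'', hfin⟩ := ansT_propagate G huv base
    rcases hfin with ⟨_, hGu'ξ''⟩ | ⟨ξ', hstep', hGu'ξ'⟩
    · exact absurd (Gcl_trans hGu'' (Gcl_symm hGu'ξ'')) hne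
    · refine ⟨ξ'', ξ', ?_, hstep', ?_, hGu'ξ'⟩
      · exact Relation.ReflTransGen.mono
          (fun a b hab => ⟨hab.1, Gcl_trans (Gcl_symm huv) hab.2⟩) _ _ hchain
      · intro hcon
        exact hne (Gcl_trans hGu'' (Gcl_trans hcon (Gcl_symm hGu'ξ')))
  · -- visible transfer condition
    intro ℓ hℓ u' hstep
    have base : AnsT Γ R x y u u' ℓ u :=
      ⟨BPA.nf R u, Relation.ReflTransGen.refl, nf_idem R u, REq_to_Gcl hR (REq_nf R u),
        Or.inr ⟨BPA.nf R u', stepR_of_step hstep, REq_to_Gcl hR (REq_nf R u')⟩⟩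
    obtain ⟨ξ'', hchain, _, hGu'', hfin⟩ := ansT_propagate G huv base
    rcases hfin with ⟨hℓτ, _⟩ | ⟨ξ', hstep', hGu'ξ'⟩
    · exact absurd hℓτ hℓ
    · refine ⟨ξ'', ξ', ?_, hstep', hGu'ξ'⟩
      exact Relation.ReflTransGen.mono
        (fun a b hab => ⟨hab.1, Gcl_trans (Gcl_symm huv) hab.2⟩) _ _ hchain

lemma Gcl_rbisim {x y : List C} (G : GoodPair Γ R x y) {a b : List C}
    (h : Gcl Γ R x y a b) : Γ.RBisim R a b := ⟨Gcl Γ R x y, isRBisim_Gcl G, h⟩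

lemma goodPair_self (hR : R ⊆ Γ.GroundC) {Y : C} (hY : Y ∉ R) :
    GoodPair Γ R [Y] [Y] :=
  ⟨hR, nf_single hY, nf_single hY, by simp, by simp, rbisim_refl hR _⟩

end BPAProof

namespace BPAProof

open BPA List

variable {C A : Type} {Γ : BPA C A} {R : Set C}

/-! #### The decomposition game -/

lemma normed_all (hΓ : Γ.Normed) : ∀ a : List C, Relation.ReflTransGen Γ.AnyStep a [] := by
  intro a
  induction a with
  | nil => exact Relation.ReflTransGen.refl
  | cons Z t ih =>
    have h1 : Relation.ReflTransGen Γ.AnyStep ([Z] ++ t) ([] ++ t) := anyStar_append (hΓ Z) t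
    simpa using h1.trans ih

lemma shape_step {Y : C} (hY : Y ∉ R) {γ η : List C} {ℓ : A}
    (h : Γ.StepR R ℓ (γ ++ [Y]) η) :
    γ = [] ∨ ∃ γ', η = γ' ++ [Y] := by
  obtain ⟨p, q, hp, hq, hpq⟩ := h
  obtain ⟨s, hps, hss⟩ := nf_spec R p
  rw [← hp] at hps
  obtain ⟨W, g, β, hrule, hpW, hq'⟩ := hpq
  rcases γ with _ | ⟨Z, γ₁⟩
  · exact Or.inl rfl
  · right
    have hWβ : W :: β = Z :: (γ₁ ++ [Y] ++ s) := by rw [← hpW, hps]; simp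
    obtain ⟨hW, hβ⟩ := List.cons_eq_cons.mp hWβ
    refine ⟨g ++ γ₁, ?_⟩
    have e1 : g ++ β = ((g ++ γ₁) ++ [Y]) ++ s := by rw [hβ]; simp
    rw [hq, hq', e1, nf_append_R hss, nf_append_single hY]

lemma shape_chain {r₀ : List C → List C → Prop} {Y : C} (hY : Y ∉ R)
    {anchor : List C} :
    ∀ {c d}, Relation.ReflTransGen (fun a b => Γ.StepR R Γ.tau a b ∧ r₀ anchor b) c d →
    ∀ γc, c = γc ++ [Y] → r₀ anchor c →
    (∃ γd, d = γd ++ [Y] ∧ r₀ anchor d) ∨ r₀ anchor [Y] := by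
  intro c d h
  induction h using Relation.ReflTransGen.head_induction_on with
  | refl => intro γc hc hanc; exact Or.inl ⟨γc, hc, hanc⟩
  | head hstep _ ih =>
    intro γc hc hanc
    subst hc
    rcases shape_step hY hstep.1 with h0 | ⟨γ', hγ'⟩
    · subst h0
      exact Or.inr (by simpa using hanc)
    · exact ih γ' hγ' hstep.2

lemma game {r₀ : List C → List C → Prop} (hr₀ : Γ.IsRBisim R r₀) {X Y : C} (hY : Y ∉ R) :
    ∀ {a : List C}, Relation.ReflTransGen Γ.AnyStep a [] →
    ∀ γ, r₀ (a ++ [X]) (γ ++ [Y]) →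
    (∃ γ', r₀ [X] (γ' ++ [Y])) ∨ (∃ δ, r₀ (δ ++ [X]) [Y]) := by
  intro a h
  induction h using Relation.ReflTransGen.head_induction_on with
  | refl => intro γ hrel; exact Or.inl ⟨γ, by simpa using hrel⟩
  | @head a a₁ hstep _ ih =>
    intro γ hrel
    obtain ⟨ℓ, hstep⟩ := hstep
    have hstepX : Γ.Step ℓ (a ++ [X]) (a₁ ++ [X]) := Step_append hstep [X]
    by_cases hcase : ℓ = Γ.tau ∧ r₀ (a ++ [X]) (a₁ ++ [X])
    · exact ih γ (hr₀.1.trans (hr₀.1.symm hcase.2) hrel)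
    · have hnfγY : BPA.nf R (γ ++ [Y]) = γ ++ [Y] := nf_append_single hY γ
      have hans : ∃ β'' β',
          Relation.ReflTransGen (fun c2 b => Γ.StepR R Γ.tau c2 b ∧ r₀ (γ ++ [Y]) b)
            (γ ++ [Y]) β'' ∧ Γ.StepR R ℓ β'' β' ∧ r₀ (a₁ ++ [X]) β' := by
        by_cases hτ : ℓ = Γ.tau
        · subst hτ
          have hne : ¬ r₀ (a ++ [X]) (a₁ ++ [X]) := fun hcon => hcase ⟨rfl, hcon⟩
          obtain ⟨β'', β', h1, h2, _, h3⟩ := isr_tau hr₀ hrel hstepX hne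
          rw [BPA.RelChain, hnfγY] at h1
          exact ⟨β'', β', h1, h2, hr₀.1.symm (hr₀.1.symm h3)⟩
        · obtain ⟨β'', β', h1, h2, h3⟩ := isr_vis hr₀ hτ hrel hstepX
          rw [BPA.RelChain, hnfγY] at h1
          exact ⟨β'', β', h1, h2, h3⟩
      obtain ⟨β'', β', hchain, hstep', hrel'⟩ := hans
      rcases shape_chain hY hchain γ rfl (hr₀.1.refl _) with ⟨γ'', hβ'', hanc⟩ | hexp
      · subst hβ''
        rcases shape_step hY hstep' with h0 | ⟨γ₃, hγ₃⟩
        · subst h0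
          refine Or.inr ⟨a, ?_⟩
          exact hr₀.1.trans hrel (by simpa using hanc)
        · exact ih γ₃ (by rw [← hγ₃]; exact hrel')
      · exact Or.inr ⟨a, hr₀.1.trans hrel hexp⟩

/-! #### Absorption of redundant prefixes -/

lemma absorb (hR : R ⊆ Γ.GroundC) {P : C} (hP : P ∉ R) :
    ∀ γ₁ : List C, (∀ Z ∈ γ₁, Γ.RBisim R (Z :: [P]) [P]) →
      Γ.RBisim R (γ₁ ++ [P]) [P] := by
  intro γ₁
  induction γ₁ with
  | nil => intro _; simpa using rbisim_refl hR [P]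
  | cons Z t ihz =>
    intro hall
    have hIH : Γ.RBisim R (t ++ [P]) [P] := ihz (fun W hW => hall W (by simp [hW]))
    have G : GoodPair Γ R (t ++ [P]) [P] :=
      ⟨hR, nf_append_single hP t, nf_single hP, by simp, by simp, hIH⟩
    have hZrd : Γ.RBisim R (Z :: [P]) [P] := hall Z (by simp)
    apply Gcl_rbisim G
    have l1 : Gcl Γ R (t ++ [P]) [P] ((Z :: t) ++ [P]) (Z :: [P]) :=
      Relation.ReflTransGen.single (Or.inl ⟨[Z], by simp, by simp⟩)
    exact l1.trans (rbisim_to_Gcl hZrd)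

end BPAProof
/-- **Relativized prime process property.**  If `X`, `Y` are `≃_R`-primes and
`αX ≃_R βY`, then `X ≃_R Y`. -/
theorem R_prime_property {C A : Type} (Γ : BPA C A) (hΓ : Γ.Normed)
    (R : Set C) (hR : R ⊆ Γ.GroundC) (X Y : C)
    (hX : Γ.RPrimeC R X) (hY : Γ.RPrimeC R Y) (α β : List C)
    (h : Γ.RBisim R (α ++ [X]) (β ++ [Y])) : Γ.RBisim R [X] [Y] := by
  classical
  open BPAProof in
  obtain ⟨r₀, hr₀, hrel⟩ := h
  have hXid : ¬ Γ.RIdentityC R X := hX.1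
  have hYid : ¬ Γ.RIdentityC R Y := hY.1
  have hXR : X ∉ R := fun hmem => hXid (rbisim_of_REq hR
    ⟨[], [X], [], rfl, rfl, fun Z hZ => by simp at hZ; subst hZ; exact hmem, by simp⟩)
  have hYR : Y ∉ R := fun hmem => hYid (rbisim_of_REq hR
    ⟨[], [Y], [], rfl, rfl, fun Z hZ => by simp at hZ; subst hZ; exact hmem, by simp⟩)
  rcases game hr₀ hYR (normed_all hΓ α) β hrel with ⟨γ, hA⟩ | ⟨δ, hB⟩
  · -- case A : `X ≃ γ Y`
    by_cases hγ : γ = []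
    · subst hγ
      exact ⟨r₀, hr₀, by simpa using hA⟩
    · have hrd : ∀ Z ∈ γ, Z ∈ Γ.RdR R [Y] := by
        by_contra hcon
        exact hX.2 ⟨Y, γ, hYid, hcon, ⟨r₀, hr₀, hA⟩⟩
      have habs : Γ.RBisim R (γ ++ [Y]) [Y] := absorb hR hYR γ (fun Z hZ => hrd Z hZ)
      exact Gcl_rbisim (goodPair_self hR hYR)
        ((rbisim_to_Gcl ⟨r₀, hr₀, hA⟩).trans (rbisim_to_Gcl habs))
  · -- case B : `δ X ≃ Y`
    by_cases hδ : δ = []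
    · subst hδ
      exact ⟨r₀, hr₀, by simpa using hB⟩
    · have hBsym : Γ.RBisim R [Y] (δ ++ [X]) := RBisim_symm ⟨r₀, hr₀, hB⟩
      have hrd : ∀ Z ∈ δ, Z ∈ Γ.RdR R [X] := by
        by_contra hcon
        exact hY.2 ⟨X, δ, hXid, hcon, hBsym⟩
      have habs : Γ.RBisim R (δ ++ [X]) [X] := absorb hR hXR δ (fun Z hZ => hrd Z hZ)
      exact Gcl_rbisim (goodPair_self hR hXR)
        ((rbisim_to_Gcl (RBisim_symm habs)).trans (rbisim_to_Gcl ⟨r₀, hr₀, hB⟩))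
end

section
/- Let Γ = (C, A, Δ) be a normed BPA system. For every R ⊆ C_G, the R-bisimilarity ≃_R is a decreasing bisimulation. -/
open Relation

namespace BPA

variable {C A : Type}

/-- A witness that the `r`-norm of `α` is at most `k`: a sequence
`α ≍ γ₁ —ℓ₁→ δ₁, δ₁ ≍ γ₂ —ℓ₂→ δ₂, …, δ_k ≍ ε` of `k` single transitions
interleaved with `r`. -/
inductive NormWitness (Γ : BPA C A) (r : List C → List C → Prop) :
    List C → ℕ → Prop
  | zero (α : List C) : r α [] → NormWitness Γ r α 0
  | succ (α γ δ : List C) (ℓ : A) (k : ℕ) :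
      r α γ → Γ.Step ℓ γ δ → NormWitness Γ r δ k → NormWitness Γ r α (k + 1)

/-- The semantic `r`-norm `‖α‖_r` of a process: the least `k` admitting a
norm witness (`⊤` if there is none). -/
noncomputable def snorm (Γ : BPA C A) (r : List C → List C → Prop)
    (α : List C) : ℕ∞ :=
  sInf {n : ℕ∞ | ∃ k : ℕ, n = (k : ℕ∞) ∧ NormWitness Γ r α k}

/-- A decreasing bisimulation: an equivalence relation such that
(1) `α ≍ ε` implies `α ⟹ ε`, and (2) norm-decreasing transitions can be
matched after a silent `≍`-preserving chain. -/
def IsDecreasingBisim (Γ : BPA C A) (r : List C → List C → Prop) : Prop :=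
  Equivalence r ∧ (∀ α, r α [] → Γ.TauStar α []) ∧
  ∀ α β ℓ α', r α β → Γ.Step ℓ α α' → Γ.snorm r α' < Γ.snorm r α →
    ∃ β'' β', RelChain (Γ.Step Γ.tau) r β β β'' ∧ Γ.Step ℓ β'' β' ∧ r α' β'

end BPA

namespace BPA

variable {C A : Type}

open Classical

lemma nf_append (R : Set C) (ζ a : List C) (ha : ∀ X ∈ a, X ∈ R) :
    nf R (ζ ++ a) = nf R ζ := by
  simp only [nf, List.reverse_append]
  rw [List.dropWhile_append, if_pos]
  simp only [List.isEmpty_iff, List.dropWhile_eq_nil_iff]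
  intro x hx
  simpa using ha x (List.mem_reverse.mp hx)

lemma nf_decomp (R : Set C) (α : List C) :
    ∃ s, α = nf R α ++ s ∧ ∀ X ∈ s, X ∈ R := by
  refine ⟨(α.reverse.takeWhile fun X => decide (X ∈ R)).reverse, ?_, ?_⟩
  · simp only [nf]
    rw [← List.reverse_append, List.takeWhile_append_dropWhile, List.reverse_reverse]
  · intro X hX
    simpa using List.mem_takeWhile_imp (List.mem_reverse.mp hX)

lemma dropWhile_idem (p : C → Bool) (l : List C) :
    (l.dropWhile p).dropWhile p = l.dropWhile p := by
  induction l with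
  | nil => simp
  | cons x xs ih =>
    cases hpx : p x <;> simp [List.dropWhile_cons, hpx, ih]

lemma nf_nf (R : Set C) (α : List C) : nf R (nf R α) = nf R α := by
  simp only [nf, List.reverse_reverse]
  rw [dropWhile_idem]

lemma REq_iff (R : Set C) (α β : List C) : REq R α β ↔ nf R α = nf R β := by
  constructor
  · rintro ⟨ζ, a, b, rfl, rfl, ha, hb⟩
    rw [nf_append R ζ a ha, nf_append R ζ b hb]
  · intro h
    obtain ⟨s, hs1, hs2⟩ := nf_decomp R α
    obtain ⟨t, ht1, ht2⟩ := nf_decomp R β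
    exact ⟨nf R α, s, t, hs1, by rw [h]; exact ht1, hs2, ht2⟩

lemma step_append {Γ : BPA C A} {ℓ : A} {p q : List C} (h : Γ.Step ℓ p q) (r : List C) :
    Γ.Step ℓ (p ++ r) (q ++ r) := by
  obtain ⟨X, γ, β, hr, rfl, rfl⟩ := h
  exact ⟨X, γ, β ++ r, hr, rfl, by rw [List.append_assoc]⟩

lemma tauStar_append {Γ : BPA C A} {p q : List C} (h : Γ.TauStar p q) (r : List C) :
    Γ.TauStar (p ++ r) (q ++ r) := by
  have h' : ReflTransGen (Γ.Step Γ.tau) p q := h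
  clear h
  induction h' with
  | refl => exact ReflTransGen.refl
  | tail _ h2 ih => exact ReflTransGen.tail ih (step_append h2 r)

lemma tauStar_list {Γ : BPA C A} : ∀ (b : List C), (∀ X ∈ b, Γ.Ground [X]) → Γ.TauStar b []
  | [], _ => ReflTransGen.refl
  | X :: b, h => by
    have h1 : Γ.TauStar ([X] ++ b) ([] ++ b) := tauStar_append (h X (by simp)) b
    exact ReflTransGen.trans h1 (tauStar_list b fun Y hY => h Y (by simp [hY]))

lemma tauStar_nil_prefix {Γ : BPA C A} {p : List C} (h : Γ.TauStar p []) :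
    ∀ ζ a, p = ζ ++ a → Γ.TauStar ζ [] := by
  have h' : ReflTransGen (Γ.Step Γ.tau) p [] := h
  clear h
  induction h' using ReflTransGen.head_induction_on with
  | refl =>
    intro ζ a hp
    obtain ⟨rfl, rfl⟩ := List.append_eq_nil_iff.mp hp.symm
    exact ReflTransGen.refl
  | head h' _ ih =>
    intro ζ a hp
    match ζ with
    | [] => exact ReflTransGen.refl
    | X :: ζ' =>
      obtain ⟨X', γ, β, hrule, hp', hq⟩ := h'
      rw [hp, List.cons_append] at hp'
      injection hp' with e1 e2
      subst e1
      have hnext := ih (γ ++ ζ') a (by rw [hq, ← e2, List.append_assoc])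
      exact ReflTransGen.head ⟨X, γ, ζ', hrule, rfl, rfl⟩ hnext

lemma isRBisim_REq {Γ : BPA C A} {R : Set C} (hR : R ⊆ Γ.GroundC) :
    Γ.IsRBisim R (REq R) := by
  have equiv : Equivalence (REq R) :=
    ⟨fun α => (REq_iff R α α).mpr rfl,
     fun {a b} h => (REq_iff R b a).mpr ((REq_iff R a b).mp h).symm,
     fun {a b c} h1 h2 => (REq_iff R a c).mpr
       (((REq_iff R a b).mp h1).trans ((REq_iff R b c).mp h2))⟩
  refine ⟨equiv, fun _ _ h => h, fun α β hab => ⟨?_, ?_, ?_⟩⟩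
  · intro hα
    obtain ⟨s, hs1, hs2⟩ := nf_decomp R α
    obtain ⟨t, ht1, ht2⟩ := nf_decomp R β
    have hnfeq := (REq_iff R α β).mp hab
    have h1 : Γ.TauStar (nf R α) [] := tauStar_nil_prefix hα _ _ hs1
    have h2 : Γ.TauStar (nf R β ++ t) ([] ++ t) := by
      rw [← hnfeq]; exact tauStar_append h1 t
    have h3 : Γ.TauStar t [] := tauStar_list t fun X hX => hR (ht2 X hX)
    rw [ht1]
    exact ReflTransGen.trans h2 h3
  · intro α' hstep hne
    have hnfeq := (REq_iff R α β).mp hab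
    refine ⟨nf R β, nf R α', ReflTransGen.refl,
      ⟨α, α', hnfeq.symm, rfl, hstep⟩, ?_, (REq_iff R α' (nf R α')).mpr (nf_nf R α').symm⟩
    intro hc
    apply hne
    have := (REq_iff R (nf R β) (nf R α')).mp hc
    rw [nf_nf, nf_nf, ← hnfeq] at this
    exact (REq_iff R α α').mpr this
  · intro a _ α' hstep
    have hnfeq := (REq_iff R α β).mp hab
    exact ⟨nf R β, nf R α', ReflTransGen.refl,
      ⟨α, α', hnfeq.symm, rfl, hstep⟩, (REq_iff R α' (nf R α')).mpr (nf_nf R α').symm⟩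

/-- The reflexive-transitive closure of `RBisim`, our candidate largest
`R`-bisimulation. -/
def EE (Γ : BPA C A) (R : Set C) : List C → List C → Prop :=
  ReflTransGen (Γ.RBisim R)

lemma rbisim_symm {Γ : BPA C A} {R : Set C} {a b : List C}
    (h : Γ.RBisim R a b) : Γ.RBisim R b a :=
  let ⟨s, hs, hab⟩ := h; ⟨s, hs, hs.1.symm hab⟩

lemma REq_rbisim {Γ : BPA C A} {R : Set C} (hR : R ⊆ Γ.GroundC) {a b : List C}
    (h : REq R a b) : Γ.RBisim R a b := ⟨REq R, isRBisim_REq hR, h⟩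

lemma EE_symm {Γ : BPA C A} {R : Set C} {a b : List C} (h : EE Γ R a b) : EE Γ R b a :=
  haveI : Std.Symm (Γ.RBisim R) := ⟨fun _ _ => rbisim_symm⟩
  ReflTransGen.symmetric.symm _ _ h

lemma EE_trans {Γ : BPA C A} {R : Set C} {a b c : List C}
    (h1 : EE Γ R a b) (h2 : EE Γ R b c) : EE Γ R a c := ReflTransGen.trans h1 h2

lemma rbisim_EE {Γ : BPA C A} {R : Set C} {a b : List C} (h : Γ.RBisim R a b) :
    EE Γ R a b := ReflTransGen.single h

lemma EE_nf {Γ : BPA C A} {R : Set C} (hR : R ⊆ Γ.GroundC) (α : List C) :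
    EE Γ R α (nf R α) :=
  rbisim_EE (REq_rbisim hR ((REq_iff R α (nf R α)).mpr (nf_nf R α).symm))

lemma relChain_last {s r : List C → List C → Prop} {anchor x y : List C}
    (h : RelChain s r anchor x y) (hx : r anchor x) : r anchor y := by
  have h' : ReflTransGen (fun u v => s u v ∧ r anchor v) x y := h
  clear h
  induction h' with
  | refl => exact hx
  | tail _ h2 _ => exact h2.2

lemma relChain_mono {s r r' : List C → List C → Prop} {a a' x y : List C}
    (h : RelChain s r a x y) (himp : ∀ z, r a z → r' a' z) : RelChain s r' a' x y :=
  ReflTransGen.mono (fun _ v hv => ⟨hv.1, himp v hv.2⟩) _ _ h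

lemma nf_fix_chain {Γ : BPA C A} {R : Set C} {P : List C → List C → Prop}
    (hP : ∀ u v, P u v → ∃ ℓ, Γ.StepR R ℓ u v) {z y : List C}
    (h : ReflTransGen P z y) (hz : nf R z = z) : nf R y = y := by
  induction h with
  | refl => exact hz
  | tail _ h2 _ =>
    obtain ⟨ℓ, p, q', _, hq', _⟩ := hP _ _ h2
    rw [hq', nf_nf]

lemma kc {Γ : BPA C A} {R : Set C} {s : List C → List C → Prop} (hs : Γ.IsRBisim R s)
    {x y : List C} (hxy : s x y) {a : A} (ha : a ≠ Γ.tau) {ξ : List C}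
    (hstep : Γ.StepR R a (nf R x) ξ) :
    ∃ y'' y', RelChain (Γ.StepR R Γ.tau) s y (nf R y) y'' ∧ Γ.StepR R a y'' y' ∧ s ξ y' := by
  obtain ⟨p, q, hp, hq, hpq⟩ := hstep
  have hpy : s p y := hs.1.trans (hs.2.1 p x ((REq_iff R p x).mpr hp.symm)) hxy
  obtain ⟨y'', y', hc, hst, hqy⟩ := (hs.2.2 p y hpy).2.2 a ha q hpq
  refine ⟨y'', y', hc, hst, hs.1.trans (hs.2.1 ξ q ((REq_iff R ξ q).mpr ?_)) hqy⟩
  rw [hq, nf_nf]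

lemma kb {Γ : BPA C A} {R : Set C} {s : List C → List C → Prop} (hs : Γ.IsRBisim R s)
    {x y : List C} (hxy : s x y) {ξ : List C}
    (hstep : Γ.StepR R Γ.tau (nf R x) ξ) :
    s ξ y ∨ ∃ y'' y', RelChain (Γ.StepR R Γ.tau) s y (nf R y) y'' ∧
      Γ.StepR R Γ.tau y'' y' ∧ s ξ y' := by
  obtain ⟨p, q, hp, hq, hpq⟩ := hstep
  have hξq : s ξ q := hs.2.1 ξ q ((REq_iff R ξ q).mpr (by rw [hq, nf_nf]))
  have hpy : s p y := hs.1.trans (hs.2.1 p x ((REq_iff R p x).mpr hp.symm)) hxy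
  by_cases hpq' : s p q
  · exact Or.inl (hs.1.trans hξq (hs.1.trans (hs.1.symm hpq') hpy))
  · obtain ⟨y'', y', hc, hst, _, hqy⟩ := (hs.2.2 p y hpy).2.1 q hpq hpq'
    exact Or.inr ⟨y'', y', hc, hst, hs.1.trans hξq hqy⟩

lemma chain_prop {Γ : BPA C A} {R : Set C} (hR : R ⊆ Γ.GroundC)
    {s : List C → List C → Prop} (hs : Γ.IsRBisim R s) {x y : List C} (hxy : s x y)
    {θ : List C} (hc : RelChain (Γ.StepR R Γ.tau) (EE Γ R) x (nf R x) θ) :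
    ∃ ψ, RelChain (Γ.StepR R Γ.tau) (EE Γ R) y (nf R y) ψ ∧ s θ ψ ∧ EE Γ R x θ := by
  have hc' : ReflTransGen (fun u v => Γ.StepR R Γ.tau u v ∧ EE Γ R x v) (nf R x) θ := hc
  clear hc
  induction hc' with
  | refl =>
    refine ⟨nf R y, ReflTransGen.refl, ?_, EE_nf hR x⟩
    exact hs.1.trans (hs.2.1 _ _ ((REq_iff R (nf R x) x).mpr (nf_nf R x)))
      (hs.1.trans hxy (hs.2.1 _ _ ((REq_iff R y (nf R y)).mpr (nf_nf R y).symm)))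
  | @tail θ₀ θ hc1 hstep ih =>
    obtain ⟨ψ, cψ, hθ₀ψ, _⟩ := ih
    have hθ₀nf : nf R θ₀ = θ₀ :=
      nf_fix_chain (fun u v hv => ⟨Γ.tau, hv.1⟩) hc1 (nf_nf R x)
    have hψnf : nf R ψ = ψ :=
      nf_fix_chain (fun u v hv => ⟨Γ.tau, hv.1⟩)
        (show ReflTransGen _ (nf R y) ψ from cψ) (nf_nf R y)
    have hch : Γ.StepR R Γ.tau (nf R θ₀) θ := by rw [hθ₀nf]; exact hstep.1
    have hEyψ : EE Γ R y ψ := relChain_last cψ (EE_nf hR y)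
    rcases kb hs hθ₀ψ hch with h | ⟨ψ'', ψ', c2, st2, hθψ'⟩
    · exact ⟨ψ, cψ, h, hstep.2⟩
    · have c2' : RelChain (Γ.StepR R Γ.tau) (EE Γ R) y ψ ψ'' := by
        rw [hψnf] at c2
        exact relChain_mono c2 fun z hz => EE_trans hEyψ (rbisim_EE ⟨s, hs, hz⟩)
      have hEyψ' : EE Γ R y ψ' :=
        EE_trans (EE_symm (rbisim_EE ⟨s, hs, hxy⟩))
          (EE_trans hstep.2 (rbisim_EE ⟨s, hs, hθψ'⟩))
      exact ⟨ψ', ReflTransGen.tail (ReflTransGen.trans cψ c2') ⟨st2, hEyψ'⟩,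
        hθψ', hstep.2⟩

/-- Answer predicate for challenges propagated along an `EE`-chain. -/
def Ans (Γ : BPA C A) (R : Set C) (a : A) (α' z : List C) : Prop :=
  ∃ z'' z', RelChain (Γ.StepR R Γ.tau) (EE Γ R) z (nf R z) z'' ∧
    Γ.StepR R a z'' z' ∧ EE Γ R α' z'

lemma ans_step {Γ : BPA C A} {R : Set C} (hR : R ⊆ Γ.GroundC) {a : A} {α' x y : List C}
    (link : Γ.RBisim R x y) (h : Ans Γ R a α' x) :
    Ans Γ R a α' y ∨ (a = Γ.tau ∧ EE Γ R α' y) := by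
  obtain ⟨s, hs, hxy⟩ := link
  obtain ⟨x'', x', c, st, hx'⟩ := h
  obtain ⟨ψ, cψ, hx''ψ, _⟩ := chain_prop hR hs hxy c
  have hx''nf : nf R x'' = x'' :=
    nf_fix_chain (fun u v hv => ⟨Γ.tau, hv.1⟩)
      (show ReflTransGen _ (nf R x) x'' from c) (nf_nf R x)
  have hψnf : nf R ψ = ψ :=
    nf_fix_chain (fun u v hv => ⟨Γ.tau, hv.1⟩)
      (show ReflTransGen _ (nf R y) ψ from cψ) (nf_nf R y)
  have hEyψ : EE Γ R y ψ := relChain_last cψ (EE_nf hR y)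
  have hch : Γ.StepR R a (nf R x'') x' := by rw [hx''nf]; exact st
  have assemble : (∃ ψ'' ψ', RelChain (Γ.StepR R Γ.tau) s ψ (nf R ψ) ψ'' ∧
      Γ.StepR R a ψ'' ψ' ∧ s x' ψ') → Ans Γ R a α' y := by
    rintro ⟨ψ'', ψ', c2, st2, hx'ψ'⟩
    have c2' : RelChain (Γ.StepR R Γ.tau) (EE Γ R) y ψ ψ'' := by
      rw [hψnf] at c2
      exact relChain_mono c2 fun z hz => EE_trans hEyψ (rbisim_EE ⟨s, hs, hz⟩)
    exact ⟨ψ'', ψ', ReflTransGen.trans cψ c2', st2,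
      EE_trans hx' (rbisim_EE ⟨s, hs, hx'ψ'⟩)⟩
  by_cases ha : a = Γ.tau
  · subst ha
    rcases kb hs hx''ψ hch with hstut | hgen
    · exact Or.inr ⟨rfl, EE_trans (EE_trans hx' (rbisim_EE ⟨s, hs, hstut⟩)) (EE_symm hEyψ)⟩
    · exact Or.inl (assemble hgen)
  · exact Or.inl (assemble (kc hs hx''ψ ha hch))

lemma isRBisim_EE {Γ : BPA C A} {R : Set C} (hR : R ⊆ Γ.GroundC) :
    Γ.IsRBisim R (EE Γ R) := by
  refine ⟨⟨fun _ => ReflTransGen.refl, fun h => EE_symm h, fun h1 h2 => EE_trans h1 h2⟩,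
    fun a b h => rbisim_EE (REq_rbisim hR h), fun α β hab => ⟨?_, ?_, ?_⟩⟩
  · intro hα
    have hab' : ReflTransGen (Γ.RBisim R) α β := hab
    clear hab
    induction hab' with
    | refl => exact hα
    | tail _ h2 ih =>
      obtain ⟨s, hs, hxy⟩ := h2
      exact (hs.2.2 _ _ hxy).1 ih
  · intro α' hstep hne
    have key : ∀ z, EE Γ R α z → Ans Γ R Γ.tau α' z := by
      intro z hz
      have hz' : ReflTransGen (Γ.RBisim R) α z := hz
      clear hz
      induction hz' with
      | refl =>
        exact ⟨nf R α, nf R α', ReflTransGen.refl, ⟨α, α', rfl, rfl, hstep⟩, EE_nf hR α'⟩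
      | @tail x y h1 link ih =>
        rcases ans_step hR link ih with h | ⟨_, hEy⟩
        · exact h
        · exact absurd (EE_trans (ReflTransGen.tail h1 link) (EE_symm hEy)) hne
    obtain ⟨β'', β', c, st, hα'β'⟩ := key β hab
    refine ⟨β'', β', c, st, fun hcon => hne ?_, hα'β'⟩
    have h1 : EE Γ R β β'' := relChain_last c (EE_nf hR β)
    exact EE_trans hab (EE_trans h1 (EE_trans hcon (EE_symm hα'β')))
  · intro a ha α' hstep
    have key : ∀ z, EE Γ R α z → Ans Γ R a α' z := by
      intro z hz
      have hz' : ReflTransGen (Γ.RBisim R) α z := hz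
      clear hz
      induction hz' with
      | refl =>
        exact ⟨nf R α, nf R α', ReflTransGen.refl, ⟨α, α', rfl, rfl, hstep⟩, EE_nf hR α'⟩
      | tail h1 link ih =>
        rcases ans_step hR link ih with h | ⟨htau, _⟩
        · exact h
        · exact absurd htau ha
    exact key β hab

lemma rbisim_iff_EE {Γ : BPA C A} {R : Set C} (hR : R ⊆ Γ.GroundC) {α β : List C} :
    Γ.RBisim R α β ↔ EE Γ R α β :=
  ⟨fun h => rbisim_EE h, fun h => ⟨EE Γ R, isRBisim_EE hR, h⟩⟩

lemma rbisim_equiv {Γ : BPA C A} {R : Set C} (hR : R ⊆ Γ.GroundC) :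
    Equivalence (Γ.RBisim R) := by
  constructor
  · exact fun α => (rbisim_iff_EE hR).mpr ReflTransGen.refl
  · exact fun h => rbisim_symm h
  · exact fun h1 h2 => (rbisim_iff_EE hR).mpr
      (EE_trans ((rbisim_iff_EE hR).mp h1) ((rbisim_iff_EE hR).mp h2))

lemma normWitness_congr {Γ : BPA C A} {R : Set C} (hR : R ⊆ Γ.GroundC) {α γ : List C}
    {k : ℕ} (h : Γ.RBisim R γ α) (hw : Γ.NormWitness (Γ.RBisim R) α k) :
    Γ.NormWitness (Γ.RBisim R) γ k := by
  cases hw with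
  | zero _ h0 => exact .zero _ ((rbisim_equiv hR).trans h h0)
  | succ _ g d l k h1 h2 h3 => exact .succ _ g d l k ((rbisim_equiv hR).trans h h1) h2 h3

lemma snorm_congr {Γ : BPA C A} {R : Set C} (hR : R ⊆ Γ.GroundC) {α γ : List C}
    (h : Γ.RBisim R α γ) :
    Γ.snorm (Γ.RBisim R) α = Γ.snorm (Γ.RBisim R) γ := by
  unfold snorm
  congr 1
  ext n
  constructor
  · rintro ⟨k, rfl, hw⟩
    exact ⟨k, rfl, normWitness_congr hR ((rbisim_equiv hR).symm h) hw⟩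
  · rintro ⟨k, rfl, hw⟩
    exact ⟨k, rfl, normWitness_congr hR h hw⟩

lemma snorm_nil {Γ : BPA C A} {R : Set C} (hR : R ⊆ Γ.GroundC) :
    Γ.snorm (Γ.RBisim R) [] = 0 := by
  refine le_antisymm (sInf_le ⟨0, by simp, .zero _ ((rbisim_equiv hR).refl [])⟩) (zero_le)

lemma realize_chain {Γ : BPA C A} {R : Set C} (hR : R ⊆ Γ.GroundC) {β : List C}
    (hne : ∀ η, Γ.RBisim R β η → η ≠ []) {θ : List C}
    (hc : RelChain (Γ.StepR R Γ.tau) (Γ.RBisim R) β (nf R β) θ) :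
    ∃ c, (∀ X ∈ c, X ∈ R) ∧ RelChain (Γ.Step Γ.tau) (Γ.RBisim R) β β (θ ++ c) := by
  have hc' : ReflTransGen (fun u v => Γ.StepR R Γ.tau u v ∧ Γ.RBisim R β v) (nf R β) θ := hc
  clear hc
  induction hc' with
  | refl =>
    obtain ⟨s, hs1, hs2⟩ := nf_decomp R β
    exact ⟨s, hs2, by rw [← hs1]; exact ReflTransGen.refl⟩
  | @tail θ₀ θ hc1 hstep ih =>
    obtain ⟨c, hcR, rchain⟩ := ih
    have hβθ₀ : Γ.RBisim R β θ₀ :=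
      relChain_last (show RelChain _ (Γ.RBisim R) β (nf R β) θ₀ from hc1)
        (REq_rbisim hR ((REq_iff R β (nf R β)).mpr (nf_nf R β).symm))
    have hθ₀nf : nf R θ₀ = θ₀ :=
      nf_fix_chain (fun u v hv => ⟨Γ.tau, hv.1⟩) hc1 (nf_nf R β)
    obtain ⟨p, q, hp, hq, hpq⟩ := hstep.1
    have hpθ₀ : nf R p = θ₀ := hp.symm
    obtain ⟨s', hps', hs'R⟩ := nf_decomp R p
    match hθ : θ₀ with
    | [] => exact absurd rfl (hne [] hβθ₀)
    | X :: ζ =>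
      obtain ⟨X₁, γ, β₀, hrule, hpe, hqe⟩ := hpq
      have hpform : p = X :: (ζ ++ s') := by rw [hps', hpθ₀]; rfl
      rw [hpform] at hpe
      injection hpe with e1 e2
      subst e1
      obtain ⟨d, hd1, hd2⟩ := nf_decomp R (γ ++ ζ)
      have hθ'eq : nf R (γ ++ ζ) = θ := by
        rw [hq, hqe, ← e2, ← List.append_assoc, nf_append R (γ ++ ζ) s' hs'R]
      have hrealstep : Γ.Step Γ.tau (X :: ζ ++ c) ((γ ++ ζ) ++ c) :=
        ⟨X, γ, ζ ++ c, hrule, by rw [List.cons_append], by rw [List.append_assoc]⟩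
      have hnewform : (γ ++ ζ) ++ c = θ ++ (d ++ c) := by
        rw [hd1, hθ'eq, List.append_assoc]
      have hrel : Γ.RBisim R β ((γ ++ ζ) ++ c) := by
        refine (rbisim_equiv hR).trans hstep.2 (REq_rbisim hR ?_)
        refine (REq_iff R θ ((γ ++ ζ) ++ c)).mpr ?_
        rw [hnewform, nf_append R θ (d ++ c) ?_, ← hθ'eq, nf_nf, hθ'eq]
        intro Y hY
        rcases List.mem_append.mp hY with h | h
        · exact hd2 Y h
        · exact hcR Y h
      refine ⟨d ++ c, ?_, ?_⟩
      · intro Y hY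
        rcases List.mem_append.mp hY with h | h
        · exact hd2 Y h
        · exact hcR Y h
      · rw [← hnewform]
        exact ReflTransGen.tail rchain ⟨hrealstep, hrel⟩

lemma realize_step {Γ : BPA C A} {R : Set C} (hR : R ⊆ Γ.GroundC) {ℓ : A}
    {θ θ'' : List C} (h : Γ.StepR R ℓ θ θ'') (hθ : nf R θ = θ) (hθne : θ ≠ [])
    {c : List C} (hc : ∀ X ∈ c, X ∈ R) :
    ∃ q', Γ.Step ℓ (θ ++ c) q' ∧ Γ.RBisim R q' θ'' := by
  obtain ⟨p, q, hp, hq, hpq⟩ := h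
  obtain ⟨s', hps', hs'R⟩ := nf_decomp R p
  match hθm : θ with
  | [] => exact absurd rfl hθne
  | X :: ζ =>
    obtain ⟨X₁, γ, β₀, hrule, hpe, hqe⟩ := hpq
    have hpform : p = X :: (ζ ++ s') := by rw [hps', ← hp]; rfl
    rw [hpform] at hpe
    injection hpe with e1 e2
    subst e1
    refine ⟨(γ ++ ζ) ++ c, ⟨X, γ, ζ ++ c, hrule, by rw [List.cons_append], by rw [List.append_assoc]⟩,
      REq_rbisim hR ?_⟩
    refine (REq_iff R ((γ ++ ζ) ++ c) θ'').mpr ?_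
    have h1 : nf R (γ ++ ζ) = θ'' := by
      rw [hq, hqe, ← e2, ← List.append_assoc, nf_append R (γ ++ ζ) s' hs'R]
    rw [nf_append R (γ ++ ζ) c hc, h1, hq, nf_nf]

end BPA

/-- `≃_R` is a decreasing bisimulation, for every `R ⊆ C_G`. -/
theorem RBisim_decreasing_bisim {C A : Type} (Γ : BPA C A) (hΓ : Γ.Normed)
    (R : Set C) (hR : R ⊆ Γ.GroundC) :
    Γ.IsDecreasingBisim (Γ.RBisim R) := by
  refine ⟨BPA.rbisim_equiv hR, ?_, ?_⟩
  · intro α h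
    obtain ⟨s, hs, hα⟩ := h
    exact (hs.2.2 [] α (hs.1.symm hα)).1 Relation.ReflTransGen.refl
  · intro α β ℓ α' hr hst hlt
    have hα0 : Γ.snorm (Γ.RBisim R) α ≠ 0 := by
      intro h0
      rw [h0] at hlt
      exact absurd hlt (not_lt.mpr zero_le)
    have hne : ∀ η, Γ.RBisim R β η → η ≠ [] := by
      intro η hη hnil
      subst hnil
      exact hα0 ((BPA.snorm_congr hR ((BPA.rbisim_equiv hR).trans hr hη)).trans
        (BPA.snorm_nil hR))
    have hnotr : ¬ Γ.RBisim R α α' := by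
      intro hc
      rw [BPA.snorm_congr hR hc] at hlt
      exact lt_irrefl _ hlt
    have hEE := BPA.isRBisim_EE (Γ := Γ) hR
    have hEab : BPA.EE Γ R α β := (BPA.rbisim_iff_EE hR).mp hr
    have main : ∃ β'' β', BPA.RelChain (Γ.StepR R Γ.tau) (BPA.EE Γ R) β (BPA.nf R β) β'' ∧
        Γ.StepR R ℓ β'' β' ∧ BPA.EE Γ R α' β' := by
      by_cases hℓ : ℓ = Γ.tau
      · subst hℓ
        obtain ⟨β'', β', c, st, _, h5⟩ := (hEE.2.2 α β hEab).2.1 α' hst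
          (fun hc => hnotr ((BPA.rbisim_iff_EE hR).mpr hc))
        exact ⟨β'', β', c, st, h5⟩
      · exact (hEE.2.2 α β hEab).2.2 ℓ hℓ α' hst
    obtain ⟨β'', β', c, st, hα'β'⟩ := main
    have cB : BPA.RelChain (Γ.StepR R Γ.tau) (Γ.RBisim R) β (BPA.nf R β) β'' :=
      BPA.relChain_mono c fun z hz => (BPA.rbisim_iff_EE hR).mpr hz
    obtain ⟨cc, hccR, rchain⟩ := BPA.realize_chain hR hne cB
    have hββ'' : Γ.RBisim R β β'' := BPA.relChain_last cB
      (BPA.REq_rbisim hR ((BPA.REq_iff R β (BPA.nf R β)).mpr (BPA.nf_nf R β).symm))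
    have hβ''nf : BPA.nf R β'' = β'' := BPA.nf_fix_chain (fun u v hv => ⟨Γ.tau, hv.1⟩)
      (show Relation.ReflTransGen _ (BPA.nf R β) β'' from cB) (BPA.nf_nf R β)
    obtain ⟨q', hq'step, hq'rel⟩ := BPA.realize_step hR st hβ''nf (hne β'' hββ'') hccR
    refine ⟨β'' ++ cc, q', rchain, hq'step, ?_⟩
    exact (BPA.rbisim_equiv hR).trans ((BPA.rbisim_iff_EE hR).mpr hα'β')
      ((BPA.rbisim_equiv hR).symm hq'rel)
end
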